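/- arXiv:1611.03879 — 6 statements merged into one kernel-verified Lean document; each statement's English description precedes it below -/
import Mathlib

section
/- For any two real I × J matrices W and W̃ with singular values S_{11} ≥ S_{22} ≥ … and S̃_{11} ≥ S̃_{22} ≥ … listed in decreasing order, the squared Frobenius norm of their difference satisfies ‖W − W̃‖_F² ≥ Σ_i (S_{ii} − S̃_{ii})². -/
open Matrix BigOperators Finset

/-- Removed from Mathlib; restored with its old statement. -/
theorem Matrix.isHermitian_transpose_mul_self {m n α : Type*} [NonUnitalCommSemiring α] [StarRing α]
    [TrivialStar α] [Fintype m] (A : Matrix m n α) : (Aᵀ * A).IsHermitian := by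
  rw [IsHermitian, conjTranspose_eq_transpose_of_trivial, transpose_mul, transpose_transpose]

lemma tele (g : ℕ → ℝ) {a b : ℕ} (h : a ≤ b) :
    ∑ m ∈ Finset.Ico a b, (g m - g (m+1)) = g a - g b := by
  induction b, h using Nat.le_induction with
  | base => simp
  | succ b hb ih => rw [Finset.sum_Ico_succ_top hb, ih]; ring

lemma sum4comm {α β γ δ : Type*} [Fintype α] [Fintype β] [Fintype γ] [Fintype δ]
    (f : α → β → γ → δ → ℝ) :
    ∑ a, ∑ b, ∑ c, ∑ e, f a b c e = ∑ c, ∑ e, ∑ a, ∑ b, f a b c e := by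
  calc ∑ a, ∑ b, ∑ c, ∑ e, f a b c e
      = ∑ a, ∑ c, ∑ b, ∑ e, f a b c e :=
        Finset.sum_congr rfl fun a _ => Finset.sum_comm
    _ = ∑ c, ∑ a, ∑ b, ∑ e, f a b c e := Finset.sum_comm
    _ = ∑ c, ∑ a, ∑ e, ∑ b, f a b c e :=
        Finset.sum_congr rfl fun c _ => Finset.sum_congr rfl fun a _ => Finset.sum_comm
    _ = ∑ c, ∑ e, ∑ a, ∑ b, f a b c e :=
        Finset.sum_congr rfl fun c _ => Finset.sum_comm

lemma key {n : ℕ} (s t : Fin n → ℝ) (hs : Antitone s) (ht : Antitone t)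
    (hs0 : ∀ j, 0 ≤ s j) (ht0 : ∀ j, 0 ≤ t j)
    (Q : Fin n → Fin n → ℝ) (hQ0 : ∀ j k, 0 ≤ Q j k)
    (hrow : ∀ j, ∑ k, Q j k ≤ 1) (hcol : ∀ k, ∑ j, Q j k ≤ 1) :
    ∑ j, ∑ k, s j * t k * Q j k ≤ ∑ j, s j * t j := by
  classical
  set sb : ℕ → ℝ := fun m => if h : m < n then s ⟨m, h⟩ else 0 with hsb
  set tb : ℕ → ℝ := fun m => if h : m < n then t ⟨m, h⟩ else 0 with htb
  set d : ℕ → ℝ := fun m => sb m - sb (m+1) with hd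
  set e : ℕ → ℝ := fun m => tb m - tb (m+1) with he
  have hrep : ∀ (u : Fin n → ℝ) (ub : ℕ → ℝ), (ub = fun m => if h : m < n then u ⟨m, h⟩ else 0) →
      ∀ j : Fin n, u j = ∑ a : Fin n, (if j ≤ a then ub a - ub (a+1) else 0) := by
    intro u ub hub j
    have h1 : ∀ a : Fin n, (if j ≤ a then ub (a:ℕ) - ub ((a:ℕ)+1) else 0)
        = (if (j:ℕ) ≤ (a:ℕ) then ub (a:ℕ) - ub ((a:ℕ)+1) else 0) := by
      intro a
      by_cases h : (j:ℕ) ≤ (a:ℕ)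
      · rw [if_pos h, if_pos (Fin.le_def.mpr h)]
      · rw [if_neg h, if_neg (fun hc => h (Fin.le_def.mp hc))]
    rw [Finset.sum_congr rfl fun a _ => h1 a,
      Fin.sum_univ_eq_sum_range (fun m => if (j:ℕ) ≤ m then ub m - ub (m+1) else 0) n,
      ← Finset.sum_filter]
    have h2 : Finset.filter (fun m => (j:ℕ) ≤ m) (Finset.range n) = Finset.Ico (j:ℕ) n := by
      ext m; simp only [Finset.mem_filter, Finset.mem_range, Finset.mem_Ico]; omega
    rw [h2, tele ub j.isLt.le]
    have h0 : ub n = 0 := by rw [hub]; simp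
    have h3 : ub (j:ℕ) = u j := by rw [hub]; simp
    rw [h0, h3, sub_zero]
  have hsrep := hrep s sb hsb
  have htrep := hrep t tb htb
  have hdnn : ∀ m, 0 ≤ d m := by
    intro m
    simp only [hd, hsb, sub_nonneg]
    by_cases h1 : m + 1 < n
    · have h2 : m < n := by omega
      rw [dif_pos h1, dif_pos h2]
      exact hs (Fin.mk_le_mk.mpr (by omega))
    · rw [dif_neg h1]
      by_cases h2 : m < n
      · rw [dif_pos h2]; exact hs0 _
      · rw [dif_neg h2]
  have henn : ∀ m, 0 ≤ e m := by
    intro m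
    simp only [he, htb, sub_nonneg]
    by_cases h1 : m + 1 < n
    · have h2 : m < n := by omega
      rw [dif_pos h1, dif_pos h2]
      exact ht (Fin.mk_le_mk.mpr (by omega))
    · rw [dif_neg h1]
      by_cases h2 : m < n
      · rw [dif_pos h2]; exact ht0 _
      · rw [dif_neg h2]
  set F : Fin n → Fin n → ℝ := fun a b => ∑ j, ∑ k,
    (if j ≤ a then (1:ℝ) else 0) * (if k ≤ b then (1:ℝ) else 0) * Q j k with hF
  set N : Fin n → Fin n → ℝ := fun a b => ∑ j,
    (if j ≤ a then (1:ℝ) else 0) * (if j ≤ b then (1:ℝ) else 0) with hN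
  have hFN : ∀ a b, F a b ≤ N a b := by
    intro a b
    rcases le_total a b with h | h
    · refine le_trans (le_of_eq rfl) (Finset.sum_le_sum fun j _ => ?_)
      by_cases hja : j ≤ a
      · have hjb : j ≤ b := le_trans hja h
        rw [if_pos hja, if_pos hjb, one_mul]
        refine le_trans (Finset.sum_le_sum fun k _ => ?_) (hrow j)
        by_cases hkb : k ≤ b
        · rw [if_pos hkb]; rw [one_mul, one_mul]
        · rw [if_neg hkb]; simpa using hQ0 j k
      · rw [if_neg hja, zero_mul]
        refine le_of_eq (Finset.sum_eq_zero fun k _ => by rw [zero_mul, zero_mul])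
    · rw [hF]
      simp only
      rw [Finset.sum_comm]
      refine Finset.sum_le_sum fun k _ => ?_
      by_cases hkb : k ≤ b
      · have hka : k ≤ a := le_trans hkb h
        rw [if_pos hka, if_pos hkb]
        simp only [one_mul, mul_one]
        refine le_trans (Finset.sum_le_sum fun j _ => ?_) (hcol k)
        by_cases hja : j ≤ a
        · rw [if_pos hja, one_mul]
        · rw [if_neg hja, zero_mul]; exact hQ0 j k
      · rw [if_neg hkb, mul_zero]
        refine le_of_eq (Finset.sum_eq_zero fun j _ => by rw [mul_zero, zero_mul])
  have stepA : ∀ j k : Fin n, s j * t k * Q j k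
      = ∑ a : Fin n, ∑ b : Fin n,
        (if j ≤ a then d a else 0) * (if k ≤ b then e b else 0) * Q j k := by
    intro j k
    rw [hsrep j, htrep k, Finset.sum_mul_sum]
    rw [Finset.sum_mul]
    simp only [Finset.sum_mul]
    rfl
  have stepB : ∑ j, ∑ k, s j * t k * Q j k
      = ∑ a : Fin n, ∑ b : Fin n, ∑ j, ∑ k,
        (if j ≤ a then d a else 0) * (if k ≤ b then e b else 0) * Q j k := by
    rw [Finset.sum_congr rfl fun j _ => Finset.sum_congr rfl fun k _ => stepA j k]
    exact sum4comm _
  have stepC : ∀ a b : Fin n, (∑ j, ∑ k,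
      (if j ≤ a then d (a:ℕ) else 0) * (if k ≤ b then e (b:ℕ) else 0) * Q j k)
      = d a * e b * F a b := by
    intro a b
    rw [hF]
    simp only [Finset.mul_sum]
    refine Finset.sum_congr rfl fun j _ => Finset.sum_congr rfl fun k _ => ?_
    split_ifs <;> ring
  have stepE : ∑ j, s j * t j = ∑ a : Fin n, ∑ b : Fin n, d a * e b * N a b := by
    have e1 : ∀ j : Fin n, s j * t j = ∑ a : Fin n, ∑ b : Fin n,
        (if j ≤ a then d a else 0) * (if j ≤ b then e b else 0) := by
      intro j
      rw [hsrep j, htrep j, Finset.sum_mul_sum]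
    rw [Finset.sum_congr rfl fun j _ => e1 j, Finset.sum_comm]
    refine Finset.sum_congr rfl fun a _ => ?_
    rw [Finset.sum_comm]
    refine Finset.sum_congr rfl fun b _ => ?_
    rw [hN]
    simp only [Finset.mul_sum]
    refine Finset.sum_congr rfl fun j _ => ?_
    split_ifs <;> ring
  rw [stepB, stepE]
  refine Finset.sum_le_sum fun a _ => Finset.sum_le_sum fun b _ => ?_
  rw [stepC a b]
  exact mul_le_mul_of_nonneg_left (hFN a b) (mul_nonneg (hdnn a) (henn b))


variable {I J : ℕ}

noncomputable def evec (W : Matrix (Fin I) (Fin J) ℝ) (j : Fin J) : Fin J → ℝ :=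
  ⇑((Matrix.isHermitian_transpose_mul_self W).eigenvectorBasis j)

noncomputable def eval' (W : Matrix (Fin I) (Fin J) ℝ) : Fin J → ℝ :=
  (Matrix.isHermitian_transpose_mul_self W).eigenvalues

noncomputable def uvec (W : Matrix (Fin I) (Fin J) ℝ) (j : Fin J) : Fin I → ℝ :=
  if eval' W j = 0 then 0 else (Real.sqrt (eval' W j))⁻¹ • (W *ᵥ evec W j)

lemma eval'_nonneg (W : Matrix (Fin I) (Fin J) ℝ) (j : Fin J) : 0 ≤ eval' W j :=
  Matrix.eigenvalues_conjTranspose_mul_self_nonneg W j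

lemma evec_orthonormal (W : Matrix (Fin I) (Fin J) ℝ) (j k : Fin J) :
    dotProduct (evec W j) (evec W k) = if j = k then 1 else 0 := by
  have h := orthonormal_iff_ite.mp
    (Matrix.isHermitian_transpose_mul_self W).eigenvectorBasis.orthonormal j k
  rw [← h]
  simp [evec, PiLp.inner_apply, RCLike.inner_apply, dotProduct, mul_comm]

lemma evec_complete (W : Matrix (Fin I) (Fin J) ℝ) (j j' : Fin J) :
    ∑ k, evec W k j * evec W k j' = if j = j' then 1 else 0 := by
  have hmem := ((Matrix.isHermitian_transpose_mul_self W).eigenvectorUnitary).2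
  have h := Matrix.mem_unitaryGroup_iff.mp hmem
  have h2 := congrFun (congrFun h j) j'
  simp only [Matrix.mul_apply, Matrix.one_apply, star_eq_conjTranspose,
    Matrix.conjTranspose_apply, Matrix.IsHermitian.eigenvectorUnitary_apply, star_trivial] at h2
  rw [← h2]
  rfl

lemma dot_W_evec (W : Matrix (Fin I) (Fin J) ℝ) (j k : Fin J) :
    dotProduct (W *ᵥ evec W j) (W *ᵥ evec W k) = if j = k then eval' W j else 0 := by
  have hT : Wᴴ = Wᵀ := Matrix.conjTranspose_eq_transpose_of_trivial W
  have heig : (Wᴴ * W) *ᵥ evec W k = eval' W k • evec W k :=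
    (Matrix.isHermitian_transpose_mul_self W).mulVec_eigenvectorBasis k
  calc dotProduct (W *ᵥ evec W j) (W *ᵥ evec W k)
      = dotProduct (evec W j ᵥ* Wᵀ) (W *ᵥ evec W k) := by rw [Matrix.vecMul_transpose]
    _ = dotProduct (evec W j) (Wᵀ *ᵥ (W *ᵥ evec W k)) :=
        (Matrix.dotProduct_mulVec _ _ _).symm
    _ = dotProduct (evec W j) ((Wᴴ * W) *ᵥ evec W k) := by rw [Matrix.mulVec_mulVec, hT]
    _ = dotProduct (evec W j) (eval' W k • evec W k) := by rw [heig]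
    _ = eval' W k * dotProduct (evec W j) (evec W k) := by
        rw [dotProduct_smul]; rfl
    _ = if j = k then eval' W j else 0 := by
        rw [evec_orthonormal]
        by_cases h : j = k
        · subst h; simp
        · simp [h]

lemma W_mulVec_evec (W : Matrix (Fin I) (Fin J) ℝ) (j : Fin J) :
    W *ᵥ evec W j = Real.sqrt (eval' W j) • uvec W j := by
  by_cases h : eval' W j = 0
  · have h0 : dotProduct (W *ᵥ evec W j) (W *ᵥ evec W j) = 0 := by
      rw [dot_W_evec, if_pos rfl, h]
    rw [dotProduct_self_eq_zero.mp h0, uvec, if_pos h, smul_zero]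
  · rw [uvec, if_neg h, smul_smul, mul_inv_cancel₀ (Real.sqrt_ne_zero'.mpr
      (lt_of_le_of_ne (eval'_nonneg W j) (Ne.symm h))), one_smul]

lemma uvec_dot (W : Matrix (Fin I) (Fin J) ℝ) (j k : Fin J) :
    dotProduct (uvec W j) (uvec W k) = if j = k ∧ eval' W j ≠ 0 then 1 else 0 := by
  by_cases hj : eval' W j = 0
  · have hz : uvec W j = 0 := by rw [uvec, if_pos hj]
    rw [hz, zero_dotProduct, if_neg (by tauto)]
  · by_cases hk : eval' W k = 0
    · have hz : uvec W k = 0 := by rw [uvec, if_pos hk]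
      rw [hz, dotProduct_zero, if_neg (by intro hc; rcases hc with ⟨h1, h2⟩; subst h1; exact hj hk)]
    · have hu1 : uvec W j = (Real.sqrt (eval' W j))⁻¹ • (W *ᵥ evec W j) := by
        rw [uvec, if_neg hj]
      have hu2 : uvec W k = (Real.sqrt (eval' W k))⁻¹ • (W *ᵥ evec W k) := by
        rw [uvec, if_neg hk]
      rw [hu1, hu2, smul_dotProduct, dotProduct_smul, dot_W_evec,
        smul_eq_mul, smul_eq_mul]
      by_cases hjk : j = k
      · subst hjk
        rw [if_pos rfl, if_pos ⟨rfl, hj⟩]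
        have hmm : Real.sqrt (eval' W j) * Real.sqrt (eval' W j) = eval' W j :=
          Real.mul_self_sqrt (eval'_nonneg W j)
        have hsne : Real.sqrt (eval' W j) ≠ 0 := Real.sqrt_ne_zero'.mpr
          (lt_of_le_of_ne (eval'_nonneg W j) (Ne.symm hj))
        field_simp
        rw [pow_two, hmm]
      · rw [if_neg hjk, if_neg (fun hc => hjk hc.1), mul_zero, mul_zero]

lemma dotProduct_sum' {α κ : Type*} [Fintype α] [Fintype κ] (v : α → ℝ) (f : κ → α → ℝ) :
    dotProduct v (∑ k, f k) = ∑ k, dotProduct v (f k) := by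
  simp only [dotProduct, Finset.sum_apply, Finset.mul_sum]
  exact Finset.sum_comm

lemma sum_dotProduct' {α κ : Type*} [Fintype α] [Fintype κ] (v : α → ℝ) (f : κ → α → ℝ) :
    dotProduct (∑ k, f k) v = ∑ k, dotProduct (f k) v := by
  rw [dotProduct_comm, dotProduct_sum']
  exact Finset.sum_congr rfl fun k _ => dotProduct_comm _ _

lemma mulVec_sum' {κ : Type*} [Fintype κ] (A : Matrix (Fin I) (Fin J) ℝ) (f : κ → Fin J → ℝ) :
    A *ᵥ (∑ k, f k) = ∑ k, A *ᵥ f k := by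
  funext i
  rw [Finset.sum_apply]
  exact dotProduct_sum' (A i) f

lemma sum_entry_mul_eq (M N : Matrix (Fin I) (Fin J) ℝ) (x : Fin J → Fin J → ℝ)
    (hx : ∀ j j', ∑ k, x k j * x k j' = if j = j' then 1 else 0) :
    ∑ i, ∑ j, M i j * N i j = ∑ k, dotProduct (M *ᵥ x k) (N *ᵥ x k) := by
  set X : Matrix (Fin J) (Fin J) ℝ := Matrix.of (fun j k => x k j) with hX
  have hXX : X * Xᵀ = 1 := by
    ext j j'
    rw [Matrix.mul_apply, Matrix.one_apply]
    simp only [hX, Matrix.transpose_apply, Matrix.of_apply]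
    exact hx j j'
  have hL : ∑ i, ∑ j, M i j * N i j = Matrix.trace (Mᵀ * N) := by
    rw [Matrix.trace, Finset.sum_comm]
    exact Finset.sum_congr rfl fun j _ => by
      simp [Matrix.diag, Matrix.mul_apply]
  have hR : ∑ k, dotProduct (M *ᵥ x k) (N *ᵥ x k) = Matrix.trace ((M * X)ᵀ * (N * X)) := by
    refine Eq.symm (Finset.sum_congr rfl fun k _ => ?_)
    simp only [Matrix.diag, Matrix.mul_apply, Matrix.transpose_apply, Matrix.mulVec,
      dotProduct, hX, Matrix.of_apply]
  rw [hL, hR]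
  symm
  calc Matrix.trace ((M * X)ᵀ * (N * X))
      = Matrix.trace (Xᵀ * (Mᵀ * (N * X))) := by rw [Matrix.transpose_mul, Matrix.mul_assoc]
    _ = Matrix.trace ((Mᵀ * (N * X)) * Xᵀ) := Matrix.trace_mul_comm _ _
    _ = Matrix.trace (Mᵀ * (N * (X * Xᵀ))) := by rw [Matrix.mul_assoc, Matrix.mul_assoc]
    _ = Matrix.trace (Mᵀ * N) := by rw [hXX, Matrix.mul_one]

lemma expand_vec (W : Matrix (Fin I) (Fin J) ℝ) (w : Fin J → ℝ) :
    w = ∑ j, (dotProduct (evec W j) w) • evec W j := by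
  funext a
  rw [Finset.sum_apply]
  simp only [Pi.smul_apply, smul_eq_mul, dotProduct]
  calc w a = ∑ b, w b * (if b = a then 1 else 0) := by simp
    _ = ∑ b, w b * (∑ j, evec W j b * evec W j a) :=
        Finset.sum_congr rfl fun b _ => by rw [evec_complete]
    _ = ∑ b, ∑ j, w b * (evec W j b * evec W j a) := by
        exact Finset.sum_congr rfl fun b _ => Finset.mul_sum _ _ _
    _ = ∑ j, ∑ b, w b * (evec W j b * evec W j a) := Finset.sum_comm
    _ = ∑ j, (∑ b, evec W j b * w b) * evec W j a := by
        refine Finset.sum_congr rfl fun j _ => ?_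
        rw [Finset.sum_mul]
        exact Finset.sum_congr rfl fun b _ => by ring

lemma parseval (W : Matrix (Fin I) (Fin J) ℝ) (w : Fin J → ℝ) :
    ∑ k, (dotProduct w (evec W k))^2 = dotProduct w w := by
  calc ∑ k, (dotProduct w (evec W k))^2
      = ∑ k, ∑ a, ∑ b, (w a * evec W k a) * (w b * evec W k b) := by
        refine Finset.sum_congr rfl fun k _ => ?_
        rw [pow_two, dotProduct, Finset.sum_mul_sum]
    _ = ∑ a, ∑ k, ∑ b, (w a * evec W k a) * (w b * evec W k b) := Finset.sum_comm
    _ = ∑ a, ∑ b, ∑ k, (w a * evec W k a) * (w b * evec W k b) :=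
        Finset.sum_congr rfl fun a _ => Finset.sum_comm
    _ = ∑ a, ∑ b, (w a * w b) * (∑ k, evec W k a * evec W k b) := by
        refine Finset.sum_congr rfl fun a _ => Finset.sum_congr rfl fun b _ => ?_
        rw [Finset.mul_sum]
        exact Finset.sum_congr rfl fun k _ => by ring
    _ = ∑ a, ∑ b, (w a * w b) * (if a = b then 1 else 0) := by
        refine Finset.sum_congr rfl fun a _ => Finset.sum_congr rfl fun b _ => ?_
        rw [evec_complete]
    _ = ∑ a, w a * w a := by
        refine Finset.sum_congr rfl fun a _ => ?_
        rw [Finset.sum_eq_single a (fun b _ hb => by rw [if_neg (Ne.symm hb), mul_zero])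
          (fun h => absurd (Finset.mem_univ a) h)]
        rw [if_pos rfl, mul_one]
    _ = dotProduct w w := rfl

lemma bessel (W : Matrix (Fin I) (Fin J) ℝ) (u : Fin I → ℝ) (hu : dotProduct u u ≤ 1) :
    ∑ k, (dotProduct u (uvec W k))^2 ≤ 1 := by
  set c : Fin J → ℝ := fun k => dotProduct u (uvec W k) with hc
  set r : Fin I → ℝ := u - ∑ k, c k • uvec W k with hr
  have h0 : 0 ≤ dotProduct r r := Finset.sum_nonneg fun i _ => mul_self_nonneg _
  have hus : dotProduct u (∑ k, c k • uvec W k) = ∑ k, (c k)^2 := by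
    rw [dotProduct_sum']
    refine Finset.sum_congr rfl fun k _ => ?_
    rw [dotProduct_smul, smul_eq_mul, pow_two]
  have hsu : dotProduct (∑ k, c k • uvec W k) u = ∑ k, (c k)^2 := by
    rw [dotProduct_comm]; exact hus
  have hss : dotProduct (∑ k, c k • uvec W k) (∑ k, c k • uvec W k) = ∑ k, (c k)^2 := by
    rw [sum_dotProduct']
    refine Finset.sum_congr rfl fun k _ => ?_
    rw [smul_dotProduct, dotProduct_sum', smul_eq_mul]
    have hin : ∀ k' : Fin J, dotProduct (uvec W k) (c k' • uvec W k')
        = c k' * (if k = k' ∧ eval' W k ≠ 0 then 1 else 0) := by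
      intro k'
      rw [dotProduct_smul, smul_eq_mul, uvec_dot]
    rw [Finset.sum_congr rfl fun k' _ => hin k']
    by_cases hk : eval' W k = 0
    · have hck : c k = 0 := by
        rw [hc]
        have : uvec W k = 0 := by rw [uvec, if_pos hk]
        simp [this]
      rw [hck]
      simp
    · rw [Finset.sum_eq_single k
        (fun k' _ hk' => by rw [if_neg (fun hcond => hk' hcond.1.symm), mul_zero])
        (fun h => absurd (Finset.mem_univ k) h)]
      rw [if_pos ⟨rfl, hk⟩, mul_one, pow_two]
  have hrr : dotProduct r r = dotProduct u u - ∑ k, (c k)^2 := by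
    rw [hr, sub_dotProduct, dotProduct_sub, dotProduct_sub,
      hus, hsu, hss]
    ring
  have : ∑ k, (c k)^2 ≤ dotProduct u u := by linarith [h0, hrr.symm.le]
  calc ∑ k, (dotProduct u (uvec W k))^2 = ∑ k, (c k)^2 := rfl
    _ ≤ dotProduct u u := this
    _ ≤ 1 := hu

lemma uvec_self_dot_le_one (W : Matrix (Fin I) (Fin J) ℝ) (j : Fin J) :
    dotProduct (uvec W j) (uvec W j) ≤ 1 := by
  rw [uvec_dot]
  split_ifs <;> norm_num

lemma sum_evec_sq_row (W W' : Matrix (Fin I) (Fin J) ℝ) (j : Fin J) :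
    ∑ k, (dotProduct (evec W j) (evec W' k))^2 = 1 := by
  rw [parseval W' (evec W j), evec_orthonormal, if_pos rfl]

lemma sum_evec_sq_col (W W' : Matrix (Fin I) (Fin J) ℝ) (k : Fin J) :
    ∑ j, (dotProduct (evec W j) (evec W' k))^2 = 1 := by
  have h : ∀ j, (dotProduct (evec W j) (evec W' k))^2
      = (dotProduct (evec W' k) (evec W j))^2 := fun j => by rw [dotProduct_comm]
  rw [Finset.sum_congr rfl fun j _ => h j, parseval W (evec W' k), evec_orthonormal, if_pos rfl]

lemma sum_uvec_sq_row (W W' : Matrix (Fin I) (Fin J) ℝ) (j : Fin J) :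
    ∑ k, (dotProduct (uvec W j) (uvec W' k))^2 ≤ 1 :=
  bessel W' (uvec W j) (uvec_self_dot_le_one W j)

lemma sum_uvec_sq_col (W W' : Matrix (Fin I) (Fin J) ℝ) (k : Fin J) :
    ∑ j, (dotProduct (uvec W j) (uvec W' k))^2 ≤ 1 := by
  have h : ∀ j, (dotProduct (uvec W j) (uvec W' k))^2
      = (dotProduct (uvec W' k) (uvec W j))^2 := fun j => by rw [dotProduct_comm]
  rw [Finset.sum_congr rfl fun j _ => h j]
  exact bessel W (uvec W' k) (uvec_self_dot_le_one W' k)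

lemma vonNeumann (W W' : Matrix (Fin I) (Fin J) ℝ) (S S' : Fin J → ℝ)
    (hS : Antitone S) (hS' : Antitone S')
    (σ σ' : Equiv.Perm (Fin J))
    (hσ : ∀ j, S j = Real.sqrt (eval' W (σ j)))
    (hσ' : ∀ j, S' j = Real.sqrt (eval' W' (σ' j))) :
    ∑ i, ∑ j, W i j * W' i j ≤ ∑ j, S j * S' j := by
  set Q0 : Fin J → Fin J → ℝ := fun j k =>
    ((dotProduct (evec W j) (evec W' k))^2 + (dotProduct (uvec W j) (uvec W' k))^2)/2 with hQ0def
  have hS0 : ∀ j, 0 ≤ S j := fun j => (hσ j) ▸ Real.sqrt_nonneg _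
  have hS0' : ∀ j, 0 ≤ S' j := fun j => (hσ' j) ▸ Real.sqrt_nonneg _
  -- Step 1: trace expansion
  have step1 : ∑ i, ∑ j, W i j * W' i j
      = ∑ k, dotProduct (W *ᵥ evec W' k) (W' *ᵥ evec W' k) :=
    sum_entry_mul_eq W W' (evec W') (evec_complete W')
  -- Step 2: expand in singular vectors
  have step2 : ∀ k, dotProduct (W *ᵥ evec W' k) (W' *ᵥ evec W' k)
      = ∑ j, (dotProduct (evec W j) (evec W' k)) *
          (Real.sqrt (eval' W j) * (Real.sqrt (eval' W' k) *
            dotProduct (uvec W j) (uvec W' k))) := by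
    intro k
    have hWk : W *ᵥ evec W' k = ∑ j, (dotProduct (evec W j) (evec W' k)) •
        (Real.sqrt (eval' W j) • uvec W j) := by
      conv_lhs => rw [expand_vec W (evec W' k)]
      rw [mulVec_sum']
      refine Finset.sum_congr rfl fun j _ => ?_
      rw [Matrix.mulVec_smul, W_mulVec_evec]
    rw [hWk, W_mulVec_evec W' k, sum_dotProduct']
    refine Finset.sum_congr rfl fun j _ => ?_
    rw [smul_dotProduct, smul_dotProduct, dotProduct_smul]
    simp only [smul_eq_mul]
  -- Step 3: bound by substochastic sums
  have step3 : ∑ i, ∑ j, W i j * W' i j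
      ≤ ∑ j, ∑ k, Real.sqrt (eval' W j) * Real.sqrt (eval' W' k) * Q0 j k := by
    rw [step1, Finset.sum_congr rfl fun k _ => step2 k, Finset.sum_comm]
    refine Finset.sum_le_sum fun j _ => Finset.sum_le_sum fun k _ => ?_
    rw [hQ0def]
    have h1 : (0:ℝ) ≤ Real.sqrt (eval' W j) := Real.sqrt_nonneg _
    have h2 : (0:ℝ) ≤ Real.sqrt (eval' W' k) := Real.sqrt_nonneg _
    nlinarith [sq_nonneg (dotProduct (evec W j) (evec W' k) - dotProduct (uvec W j) (uvec W' k)),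
      mul_nonneg h1 h2,
      mul_nonneg (mul_nonneg h1 h2)
        (sq_nonneg (dotProduct (evec W j) (evec W' k) - dotProduct (uvec W j) (uvec W' k)))]
  -- Step 4: reindex by the permutations
  have step4 : ∑ j, ∑ k, Real.sqrt (eval' W j) * Real.sqrt (eval' W' k) * Q0 j k
      = ∑ j, ∑ k, S j * S' k * Q0 (σ j) (σ' k) := by
    rw [← Equiv.sum_comp σ (fun j => ∑ k, Real.sqrt (eval' W j) * Real.sqrt (eval' W' k) * Q0 j k)]
    refine Finset.sum_congr rfl fun j _ => ?_
    rw [← Equiv.sum_comp σ' (fun k => Real.sqrt (eval' W (σ j)) * Real.sqrt (eval' W' k) *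
      Q0 (σ j) k)]
    refine Finset.sum_congr rfl fun k _ => ?_
    rw [hσ j, hσ' k]
  -- Step 5: apply the rearrangement bound
  have step5 : ∑ j, ∑ k, S j * S' k * Q0 (σ j) (σ' k) ≤ ∑ j, S j * S' j := by
    refine key S S' hS hS' hS0 hS0' (fun j k => Q0 (σ j) (σ' k)) (fun j k => by positivity)
      (fun j => ?_) (fun k => ?_)
    · rw [Equiv.sum_comp σ' (fun k => Q0 (σ j) k)]
      rw [hQ0def]
      simp only
      rw [← Finset.sum_div, Finset.sum_add_distrib]
      rw [sum_evec_sq_row W W' (σ j)]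
      linarith [sum_uvec_sq_row W W' (σ j)]
    · rw [Equiv.sum_comp σ (fun j => Q0 j (σ' k))]
      rw [hQ0def]
      simp only
      rw [← Finset.sum_div, Finset.sum_add_distrib]
      rw [sum_evec_sq_col W W' (σ' k)]
      linarith [sum_uvec_sq_col W W' (σ' k)]
  calc ∑ i, ∑ j, W i j * W' i j
      ≤ ∑ j, ∑ k, Real.sqrt (eval' W j) * Real.sqrt (eval' W' k) * Q0 j k := step3
    _ = ∑ j, ∑ k, S j * S' k * Q0 (σ j) (σ' k) := step4
    _ ≤ ∑ j, S j * S' j := step5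

lemma frob_eq (W : Matrix (Fin I) (Fin J) ℝ) (S : Fin J → ℝ) (σ : Equiv.Perm (Fin J))
    (hσ : ∀ j, S j = Real.sqrt (eval' W (σ j))) :
    ∑ i, ∑ j, W i j * W i j = ∑ j, (S j)^2 := by
  rw [sum_entry_mul_eq W W (evec W) (evec_complete W)]
  have h1 : ∀ k : Fin J, dotProduct (W *ᵥ evec W k) (W *ᵥ evec W k) = eval' W k :=
    fun k => by rw [dot_W_evec, if_pos rfl]
  rw [Finset.sum_congr rfl fun k _ => h1 k, ← Equiv.sum_comp σ (fun k => eval' W k)]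
  refine Finset.sum_congr rfl fun k _ => ?_
  rw [hσ k, Real.sq_sqrt (eval'_nonneg W (σ k))]


/-- (Mirsky's inequality for the Frobenius norm.) For any two real
`I × J` matrices `W` and `W̃`, if `S` and `S̃` list the singular values of `W` and `W̃`
(the square roots of the eigenvalues of `WᵀW`, resp. `W̃ᵀW̃`, with multiplicity) in
decreasing order, then `‖W − W̃‖_F² ≥ ∑ i (S_i − S̃_i)²`. -/
theorem frobenius_sq_ge_sum_singular_value_diff_sq {I J : ℕ}
    (W W' : Matrix (Fin I) (Fin J) ℝ) (S S' : Fin J → ℝ)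
    (hS : Antitone S) (hS' : Antitone S')
    (hSval : ∃ σ : Equiv.Perm (Fin J), ∀ j,
      S j = Real.sqrt ((Matrix.isHermitian_transpose_mul_self W).eigenvalues (σ j)))
    (hSval' : ∃ σ : Equiv.Perm (Fin J), ∀ j,
      S' j = Real.sqrt ((Matrix.isHermitian_transpose_mul_self W').eigenvalues (σ j))) :
    ∑ j : Fin J, (S j - S' j) ^ 2 ≤ ∑ i : Fin I, ∑ j : Fin J, (W i j - W' i j) ^ 2 := by
  obtain ⟨σ, hσ⟩ := hSval
  obtain ⟨σ', hσ'⟩ := hSval'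
  have hσ2 : ∀ j, S j = Real.sqrt (eval' W (σ j)) := hσ
  have hσ2' : ∀ j, S' j = Real.sqrt (eval' W' (σ' j)) := hσ'
  have hW : ∑ i, ∑ j, W i j * W i j = ∑ j, (S j)^2 := frob_eq W S σ hσ2
  have hW' : ∑ i, ∑ j, W' i j * W' i j = ∑ j, (S' j)^2 := frob_eq W' S' σ' hσ2'
  have hVN : ∑ i, ∑ j, W i j * W' i j ≤ ∑ j, S j * S' j :=
    vonNeumann W W' S S' hS hS' σ σ' hσ2 hσ2'
  have expand1 : ∑ j : Fin J, (S j - S' j)^2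
      = ∑ j, (S j)^2 + ∑ j, (S' j)^2 - 2 * ∑ j, S j * S' j := by
    rw [Finset.mul_sum, ← Finset.sum_add_distrib, ← Finset.sum_sub_distrib]
    exact Finset.sum_congr rfl fun j _ => by ring
  have expand2 : ∑ i : Fin I, ∑ j : Fin J, (W i j - W' i j)^2
      = ∑ i, ∑ j, W i j * W i j + ∑ i, ∑ j, W' i j * W' i j
        - 2 * ∑ i, ∑ j, W i j * W' i j := by
    rw [Finset.mul_sum, ← Finset.sum_add_distrib, ← Finset.sum_sub_distrib]
    refine Finset.sum_congr rfl fun i _ => ?_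
    rw [Finset.mul_sum, ← Finset.sum_add_distrib, ← Finset.sum_sub_distrib]
    exact Finset.sum_congr rfl fun j _ => by ring
  rw [expand1, expand2]
  linarith [hVN]
end

section
/- Let W be a real I × J matrix with singular value decomposition W = U S Vᵀ, and set W̃ = U S̃ Vᵀ where S̃_{ii} = min(S_{ii}, 1). Then W̃ solves the projection problem min_{M} ‖W − M‖_F subject to I − M Mᵀ being positive semidefinite: that is, for every real I × J matrix M with I − M Mᵀ positive semidefinite, ‖W − W̃‖_F ≤ ‖W − M‖_F. -/
open Matrix BigOperators

/-- Let `W = U S Vᵀ` be a singular value decomposition of a real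
`I × J` matrix, and let `W̃ = U S̃ Vᵀ` where `S̃` clips each diagonal entry of `S` at
`1`. Then `W̃` solves `min_M ‖W − M‖_F` subject to `I − M Mᵀ ⪰ 0`: for every real
`I × J` matrix `M` with `I − M Mᵀ` positive semidefinite, `‖W − W̃‖_F ≤ ‖W − M‖_F`. -/
theorem svd_clipping_is_projection {I J : ℕ}
    (W : Matrix (Fin I) (Fin J) ℝ)
    (U : Matrix (Fin I) (Fin I) ℝ) (V : Matrix (Fin J) (Fin J) ℝ)
    (S : Matrix (Fin I) (Fin J) ℝ)
    (hU1 : U * Uᵀ = 1) (hU2 : Uᵀ * U = 1)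
    (hV1 : V * Vᵀ = 1) (hV2 : Vᵀ * V = 1)
    (hSdiag : ∀ (i : Fin I) (j : Fin J), (i : ℕ) ≠ (j : ℕ) → S i j = 0)
    (hSnn : ∀ (i : Fin I) (j : Fin J), (i : ℕ) = (j : ℕ) → 0 ≤ S i j)
    (hW : W = U * S * Vᵀ) :
    ∀ M : Matrix (Fin I) (Fin J) ℝ, (1 - M * Mᵀ).PosSemidef →
      Real.sqrt (∑ i : Fin I, ∑ j : Fin J,
          (W i j - (U * (Matrix.of fun (i : Fin I) (j : Fin J) =>
              if (i : ℕ) = (j : ℕ) then min (S i j) 1 else 0) * Vᵀ) i j) ^ 2)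
        ≤ Real.sqrt (∑ i : Fin I, ∑ j : Fin J, (W i j - M i j) ^ 2) := by
  intro M hM
  set St : Matrix (Fin I) (Fin J) ℝ :=
    Matrix.of fun (i : Fin I) (j : Fin J) =>
      if (i : ℕ) = (j : ℕ) then min (S i j) 1 else 0 with hSt
  set N : Matrix (Fin I) (Fin J) ℝ := Uᵀ * M * V with hNdef
  -- M = U * N * Vᵀ
  have hMeq : U * N * Vᵀ = M := by
    rw [hNdef]
    simp only [Matrix.mul_assoc, hV1, Matrix.mul_one]
    rw [← Matrix.mul_assoc, hU1, Matrix.one_mul]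
  -- Frobenius norm squared invariance under U, Vᵀ
  have tr : ∀ B : Matrix (Fin I) (Fin J) ℝ,
      ∑ i, ∑ j, (B i j) ^ 2 = Matrix.trace (B * Bᵀ) := by
    intro B
    simp [Matrix.trace, Matrix.diag, Matrix.mul_apply, sq]
  have sumsq : ∀ A : Matrix (Fin I) (Fin J) ℝ,
      ∑ i, ∑ j, ((U * A * Vᵀ) i j) ^ 2 = ∑ i, ∑ j, (A i j) ^ 2 := by
    intro A
    rw [tr, tr]
    have h1 : (U * A * Vᵀ) * (U * A * Vᵀ)ᵀ = U * ((A * Aᵀ) * Uᵀ) := by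
      simp only [Matrix.transpose_mul, Matrix.transpose_transpose, Matrix.mul_assoc]
      rw [← Matrix.mul_assoc Vᵀ V, hV2, Matrix.one_mul]
    rw [h1, Matrix.trace_mul_comm U ((A * Aᵀ) * Uᵀ), Matrix.mul_assoc, hU2,
      Matrix.mul_one]
  -- difference matrices
  have e1 : W - U * St * Vᵀ = U * (S - St) * Vᵀ := by
    rw [hW, Matrix.mul_sub, Matrix.sub_mul]
  have e2 : W - M = U * (S - N) * Vᵀ := by
    rw [hW, ← hMeq, Matrix.mul_sub, Matrix.sub_mul]
  -- the constraint transfers to N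
  have hN : (1 - N * Nᵀ).PosSemidef := by
    have h := hM.conjTranspose_mul_mul_same U
    have heq : Uᴴ * (1 - M * Mᵀ) * U = 1 - N * Nᵀ := by
      rw [Matrix.conjTranspose_eq_transpose_of_trivial, hNdef]
      simp only [Matrix.mul_sub, Matrix.sub_mul, Matrix.mul_one, hU2,
        Matrix.transpose_mul, Matrix.transpose_transpose]
      congr 1
      simp only [Matrix.mul_assoc]
      rw [← Matrix.mul_assoc V Vᵀ, hV1, Matrix.one_mul]
    rwa [heq] at h
  -- entries of N are bounded in absolute value by 1
  have hb : ∀ (i : Fin I) (j : Fin J), (N i j) ^ 2 ≤ 1 := by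
    intro i j
    have h0 := hN.dotProduct_mulVec_nonneg (Pi.single i 1)
    have h1 : (Pi.single i 1 : Fin I → ℝ) ⬝ᵥ ((1 - N * Nᵀ) *ᵥ Pi.single i 1)
        = 1 - ∑ k, N i k * N i k := by
      rw [Matrix.mulVec_single, single_dotProduct]
      simp [Matrix.sub_apply, Matrix.one_apply, Matrix.mul_apply]
    rw [star_trivial, h1] at h0
    have h2 : (N i j) ^ 2 ≤ ∑ k, N i k * N i k := by
      rw [sq]
      exact Finset.single_le_sum (f := fun k => N i k * N i k)
        (fun k _ => mul_self_nonneg _) (Finset.mem_univ j)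
    linarith
  -- pointwise comparison
  apply Real.sqrt_le_sqrt
  rw [show (∑ i, ∑ j, (W i j - (U * St * Vᵀ) i j) ^ 2)
        = ∑ i, ∑ j, ((W - U * St * Vᵀ) i j) ^ 2 from by
      simp [Matrix.sub_apply],
    show (∑ i, ∑ j, (W i j - M i j) ^ 2)
        = ∑ i, ∑ j, ((W - M) i j) ^ 2 from by simp [Matrix.sub_apply],
    e1, e2, sumsq, sumsq]
  refine Finset.sum_le_sum fun i _ => Finset.sum_le_sum fun j _ => ?_
  simp only [Matrix.sub_apply, hSt, Matrix.of_apply]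
  by_cases hij : (i : ℕ) = (j : ℕ)
  · simp only [hij, if_true]
    have hs := hSnn i j hij
    have hn : N i j ≤ 1 := by nlinarith [hb i j]
    rcases le_total (S i j) 1 with h | h
    · rw [min_eq_left h]
      simpa using sq_nonneg (S i j - N i j)
    · rw [min_eq_right h]
      nlinarith
  · simp only [hij, if_false, hSdiag i j hij]
    simpa using sq_nonneg (0 - N i j)
end

section
/- Let Ω be a symmetric real I × I matrix and let R ⊆ ℝ^I be an open cone (i.e., an open set closed under multiplication by positive scalars). If there exists u ∈ R with uᵀ Ω u < 0, then the integral over v ∈ R of exp(−½ vᵀ Ω v) dv is infinite. -/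
open Matrix BigOperators MeasureTheory Pointwise

/-- Let `Ω` be a symmetric real `I × I` matrix and `R ⊆ ℝ^I` an open
cone (open and closed under multiplication by positive scalars). If some `u ∈ R`
satisfies `uᵀ Ω u < 0`, then `∫_R exp(−½ vᵀ Ω v) dv = ∞`. -/
theorem gaussian_integral_diverges_on_cone_with_negative_direction {I : ℕ}
    (Ω : Matrix (Fin I) (Fin I) ℝ) (hΩ : Ω.IsSymm)
    (R : Set (Fin I → ℝ)) (hRopen : IsOpen R)
    (hRcone : ∀ v ∈ R, ∀ l : ℝ, 0 < l → l • v ∈ R)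
    (u : Fin I → ℝ) (huR : u ∈ R) (huneg : u ⬝ᵥ (Ω *ᵥ u) < 0) :
    ∫⁻ v in R, ENNReal.ofReal (Real.exp (-(1 / 2) * (v ⬝ᵥ (Ω *ᵥ v)))) = ⊤ := by
  -- I ≥ 1
  have hI : 0 < I := by
    by_contra h
    push_neg at h
    interval_cases I
    · simp [dotProduct] at huneg
  -- continuity of the quadratic form
  have hcont : Continuous fun v : Fin I → ℝ => v ⬝ᵥ (Ω *ᵥ v) := by
    simp only [dotProduct, mulVec]
    exact continuous_finset_sum _ fun i _ =>
      (continuous_apply i).mul (continuous_finset_sum _ fun j _ =>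
        continuous_const.mul (continuous_apply j))
  set S : Set (Fin I → ℝ) := R ∩ {v | v ⬝ᵥ (Ω *ᵥ v) < 0} with hS
  have hSopen : IsOpen S := hRopen.inter (isOpen_lt hcont continuous_const)
  have huS : u ∈ S := ⟨huR, huneg⟩
  have hScone : ∀ v ∈ S, ∀ l : ℝ, 0 < l → l • v ∈ S := by
    rintro v ⟨hvR, hvq⟩ l hl
    refine ⟨hRcone v hvR l hl, ?_⟩
    have : (l • v) ⬝ᵥ (Ω *ᵥ (l • v)) = (l * l) * (v ⬝ᵥ (Ω *ᵥ v)) := by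
      rw [Matrix.mulVec_smul, smul_dotProduct, dotProduct_smul]
      ring_nf
    simp only [Set.mem_setOf_eq, this]
    exact mul_neg_of_pos_of_neg (mul_pos hl hl) hvq
  -- volume S = ⊤
  have hSpos : 0 < volume S := hSopen.measure_pos volume ⟨u, huS⟩
  have hSvol : volume S = ⊤ := by
    by_contra hfin
    have hsub : (2 : ℝ) • S ⊆ S := by
      rintro w ⟨v, hv, rfl⟩
      exact hScone v hv 2 (by norm_num)
    have hsmul : volume ((2 : ℝ) • S) =
        ENNReal.ofReal (|(2:ℝ) ^ Module.finrank ℝ (Fin I → ℝ)|) * volume S :=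
      Measure.addHaar_smul volume 2 S
    have hrank : Module.finrank ℝ (Fin I → ℝ) = I := by simp
    have h2 : (2 : ENNReal) * volume S ≤ volume S := by
      calc (2 : ENNReal) * volume S
          ≤ ENNReal.ofReal (|(2:ℝ) ^ I|) * volume S := by
            gcongr
            rw [abs_of_pos (by positivity), ← ENNReal.ofReal_ofNat]
            exact ENNReal.ofReal_le_ofReal (by
              calc (2:ℝ) = 2 ^ 1 := (pow_one 2).symm
              _ ≤ 2 ^ I := pow_le_pow_right₀ (by norm_num) hI)
        _ = volume ((2 : ℝ) • S) := by rw [hsmul, hrank]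
        _ ≤ volume S := measure_mono hsub
    have hlt : volume S < 2 * volume S := by
      rw [two_mul]
      exact ENNReal.lt_add_right hfin hSpos.ne'
    exact absurd (lt_of_lt_of_le hlt h2) (lt_irrefl _)
  -- lintegral bound
  have hmeas : Measurable fun v : Fin I → ℝ =>
      ENNReal.ofReal (Real.exp (-(1 / 2) * (v ⬝ᵥ (Ω *ᵥ v)))) :=
    (ENNReal.measurable_ofReal.comp
      ((Real.continuous_exp.comp (continuous_const.mul hcont)).measurable))
  have hone : ∀ v ∈ S, (1 : ENNReal) ≤
      ENNReal.ofReal (Real.exp (-(1 / 2) * (v ⬝ᵥ (Ω *ᵥ v)))) := by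
    rintro v ⟨-, hv⟩
    have hq : v ⬝ᵥ (Ω *ᵥ v) < 0 := hv
    have h0 : (0:ℝ) ≤ -(1/2) * (v ⬝ᵥ (Ω *ᵥ v)) := by nlinarith
    exact ENNReal.one_le_ofReal.mpr (Real.one_le_exp h0)
  have hle : volume S ≤ ∫⁻ v in R, ENNReal.ofReal (Real.exp (-(1 / 2) * (v ⬝ᵥ (Ω *ᵥ v)))) := by
    calc volume S = ∫⁻ _ in S, (1 : ENNReal) := (setLIntegral_one S).symm
      _ ≤ ∫⁻ v in S, ENNReal.ofReal (Real.exp (-(1 / 2) * (v ⬝ᵥ (Ω *ᵥ v)))) :=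
          setLIntegral_mono hmeas hone
      _ ≤ _ := lintegral_mono_set Set.inter_subset_left
  rw [hSvol] at hle
  exact top_le_iff.mp hle
end

section
/- Let W be a real I × J matrix with columns W_1, …, W_J, let b ∈ ℝ^J, and let c ∈ (0,1). For v ∈ ℝ^I define α_j(v) = 1 if W_jᵀ v + b_j > 0 and α_j(v) = c otherwise. If I − W Wᵀ is positive definite, then the unnormalized leaky RBM marginal is normalizable: the integral over v ∈ ℝ^I of exp(−½ vᵀ (I − Σ_{j=1}^J α_j(v) W_j W_jᵀ) v + Σ_{j=1}^J α_j(v) b_j W_jᵀ v) dv is finite. -/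
open Matrix BigOperators MeasureTheory

private lemma lrbm_sum_mulVec {I J : ℕ} (M : Fin J → Matrix (Fin I) (Fin I) ℝ)
    (v : Fin I → ℝ) : (∑ j, M j) *ᵥ v = ∑ j, M j *ᵥ v := by
  ext i
  simp only [mulVec, dotProduct, Matrix.sum_apply, Finset.sum_apply, Finset.sum_mul]
  rw [Finset.sum_comm]

private lemma lrbm_quad_vecMulVec {I : ℕ} (w v : Fin I → ℝ) :
    v ⬝ᵥ (Matrix.vecMulVec w w *ᵥ v) = (w ⬝ᵥ v) ^ 2 := by
  have h : (w ⬝ᵥ v) ^ 2 = ∑ i, ∑ k, (w i * v i) * (w k * v k) := by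
    rw [sq, dotProduct, Finset.sum_mul_sum]
  rw [h]
  simp only [dotProduct, mulVec, vecMulVec_apply, Finset.mul_sum]
  exact Finset.sum_congr rfl fun i _ => Finset.sum_congr rfl fun k _ => by ring

private lemma lrbm_dot_sum {I J : ℕ} (v : Fin I → ℝ) (u : Fin J → Fin I → ℝ) :
    v ⬝ᵥ (∑ j, u j) = ∑ j, v ⬝ᵥ u j := by
  simp only [dotProduct, Finset.sum_apply, Finset.mul_sum]
  rw [Finset.sum_comm]

private lemma lrbm_eps {I : ℕ} (A : Matrix (Fin I) (Fin I) ℝ) (hA : A.PosDef) :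
    ∃ ε > (0:ℝ), ∀ v : Fin I → ℝ, ε * (∑ i, v i ^ 2) ≤ v ⬝ᵥ (A *ᵥ v) := by
  have hcont : Continuous fun v : Fin I → ℝ => v ⬝ᵥ (A *ᵥ v) := by
    simp only [dotProduct, mulVec]
    fun_prop
  rcases Nat.eq_zero_or_pos I with hI | hI
  · refine ⟨1, one_pos, fun v => ?_⟩
    subst hI
    simp [dotProduct]
  · set S : Set (Fin I → ℝ) := {v | ∑ i, v i ^ 2 = 1} with hS
    have hclosed : IsClosed S := by
      have : Continuous fun v : Fin I → ℝ => ∑ i, v i ^ 2 := by fun_prop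
      exact isClosed_eq this continuous_const
    have hbdd : Bornology.IsBounded S := by
      rw [Metric.isBounded_iff_subset_closedBall 0]
      refine ⟨1, fun v hv => ?_⟩
      have hv' : ∑ i, v i ^ 2 = 1 := hv
      simp only [Metric.mem_closedBall, dist_zero_right]
      rw [pi_norm_le_iff_of_nonneg zero_le_one]
      intro i
      rw [Real.norm_eq_abs, abs_le]
      constructor <;> nlinarith [Finset.single_le_sum (f := fun i => v i ^ 2)
        (fun j _ => sq_nonneg (v j)) (Finset.mem_univ i), sq_nonneg (v i), hv']
    have hcomp : IsCompact S := Metric.isCompact_of_isClosed_isBounded hclosed hbdd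
    have hne : S.Nonempty := by
      refine ⟨Pi.single ⟨0, hI⟩ 1, ?_⟩
      simp [hS, Pi.single_apply]
    obtain ⟨x, hxS, hxmin⟩ := hcomp.exists_isMinOn hne hcont.continuousOn
    have hx0 : x ≠ 0 := by
      intro h
      rw [h] at hxS
      simp [hS] at hxS
    refine ⟨x ⬝ᵥ (A *ᵥ x), hA.dotProduct_mulVec_pos hx0, fun v => ?_⟩
    rcases eq_or_ne v 0 with rfl | hv
    · simp
    · have hsum : 0 < ∑ i, v i ^ 2 := by
        rcases Function.ne_iff.mp hv with ⟨i, hi⟩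
        have : 0 < v i ^ 2 := lt_of_le_of_ne (sq_nonneg _) (Ne.symm (pow_ne_zero 2 hi))
        exact lt_of_lt_of_le this (Finset.single_le_sum
          (fun j _ => sq_nonneg (v j)) (Finset.mem_univ i))
      set t : ℝ := Real.sqrt (∑ i, v i ^ 2) with ht
      have ht0 : 0 < t := Real.sqrt_pos.mpr hsum
      have ht2 : t ^ 2 = ∑ i, v i ^ 2 := Real.sq_sqrt hsum.le
      have hmem : t⁻¹ • v ∈ S := by
        simp only [hS, Set.mem_setOf_eq, Pi.smul_apply, smul_eq_mul, mul_pow,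
          ← Finset.mul_sum, ← ht2]
        field_simp
      have hq : (t⁻¹ • v) ⬝ᵥ (A *ᵥ (t⁻¹ • v)) = t⁻¹ ^ 2 * (v ⬝ᵥ (A *ᵥ v)) := by
        rw [mulVec_smul, smul_dotProduct, dotProduct_smul]
        simp [smul_eq_mul]
        ring
      have := hxmin hmem
      simp only [Set.mem_setOf_eq] at this
      rw [hq] at this
      have h3 : t⁻¹ ^ 2 * (v ⬝ᵥ (A *ᵥ v)) * t ^ 2 = v ⬝ᵥ (A *ᵥ v) := by
        field_simp
      calc (x ⬝ᵥ (A *ᵥ x)) * ∑ i, v i ^ 2 = (x ⬝ᵥ (A *ᵥ x)) * t ^ 2 := by rw [ht2]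
        _ ≤ t⁻¹ ^ 2 * (v ⬝ᵥ (A *ᵥ v)) * t ^ 2 :=
            mul_le_mul_of_nonneg_right this (sq_nonneg t)
        _ = v ⬝ᵥ (A *ᵥ v) := h3

/-- Normalizability of the leaky RBM marginal. Let `W` be a real
`I × J` matrix with columns `W_j`, `b ∈ ℝ^J`, and leakiness `c ∈ (0,1)`. For
`v ∈ ℝ^I` set `α_j(v) = 1` if `W_jᵀ v + b_j > 0` and `α_j(v) = c` otherwise.
If `I − W Wᵀ` is positive definite, then
`∫_{ℝ^I} exp(−½ vᵀ (I − ∑_j α_j(v) W_j W_jᵀ) v + ∑_j α_j(v) b_j W_jᵀ v) dv < ∞`. -/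
theorem leaky_rbm_marginal_normalizable {I J : ℕ}
    (W : Matrix (Fin I) (Fin J) ℝ) (b : Fin J → ℝ) (c : ℝ)
    (hc : c ∈ Set.Ioo (0 : ℝ) 1) (hW : (1 - W * Wᵀ).PosDef) :
    (∫⁻ v : Fin I → ℝ, ENNReal.ofReal (Real.exp
        (-(1 / 2) * (v ⬝ᵥ ((1 - ∑ j : Fin J,
              (if 0 < (fun i => W i j) ⬝ᵥ v + b j then (1 : ℝ) else c) •
                Matrix.vecMulVec (fun i => W i j) (fun i => W i j)) *ᵥ v))
          + ∑ j : Fin J,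
              (if 0 < (fun i => W i j) ⬝ᵥ v + b j then (1 : ℝ) else c) * b j *
                ((fun i => W i j) ⬝ᵥ v)))) < ⊤ := by
  obtain ⟨hc0, hc1⟩ := hc
  obtain ⟨ε, hε, hεle⟩ := lrbm_eps _ hW
  set w : Fin J → Fin I → ℝ := fun j i => W i j with hwdef
  set α : (Fin I → ℝ) → Fin J → ℝ :=
    fun v j => if 0 < w j ⬝ᵥ v + b j then (1 : ℝ) else c with hα
  set d : Fin I → ℝ := fun i => ∑ j, |b j| * |W i j| with hd
  set K : ℝ := ∑ i, d i ^ 2 / ε with hK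
  -- alpha bounds
  have hα01 : ∀ v j, 0 < α v j ∧ α v j ≤ 1 := by
    intro v j
    simp only [hα]
    split <;> constructor <;> linarith
  -- quadratic form identity
  have hquad : ∀ v : Fin I → ℝ,
      v ⬝ᵥ ((1 - ∑ j, α v j • Matrix.vecMulVec (w j) (w j)) *ᵥ v)
        = v ⬝ᵥ v - ∑ j, α v j * (w j ⬝ᵥ v) ^ 2 := by
    intro v
    rw [sub_mulVec, dotProduct_sub, one_mulVec, lrbm_sum_mulVec, lrbm_dot_sum]
    congr 1
    refine Finset.sum_congr rfl fun j _ => ?_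
    rw [smul_mulVec, dotProduct_smul, smul_eq_mul, lrbm_quad_vecMulVec]
  -- quadratic form of 1 - W Wᵀ
  have hWWt : ∀ v : Fin I → ℝ,
      v ⬝ᵥ ((1 - W * Wᵀ) *ᵥ v) = v ⬝ᵥ v - ∑ j, (w j ⬝ᵥ v) ^ 2 := by
    intro v
    rw [sub_mulVec, dotProduct_sub, one_mulVec]
    congr 1
    rw [← mulVec_mulVec, dotProduct_mulVec, ← mulVec_transpose]
    simp only [dotProduct, mulVec, transpose_apply, sq]
    rfl
  -- lower bound on the quadratic form appearing in the exponent
  have hQ : ∀ v : Fin I → ℝ, ε * (∑ i, v i ^ 2) ≤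
      v ⬝ᵥ ((1 - ∑ j, α v j • Matrix.vecMulVec (w j) (w j)) *ᵥ v) := by
    intro v
    rw [hquad v]
    refine le_trans ((hεle v).trans_eq (hWWt v)) ?_
    have : ∑ j, α v j * (w j ⬝ᵥ v) ^ 2 ≤ ∑ j, (w j ⬝ᵥ v) ^ 2 :=
      Finset.sum_le_sum fun j _ => by
        nlinarith [(hα01 v j).1, (hα01 v j).2, sq_nonneg (w j ⬝ᵥ v)]
    linarith
  -- upper bound on the linear term
  have hL : ∀ v : Fin I → ℝ,
      ∑ j, α v j * b j * (w j ⬝ᵥ v) ≤ ∑ i, d i * |v i| := by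
    intro v
    have h1 : ∀ j, α v j * b j * (w j ⬝ᵥ v) ≤ |b j| * |w j ⬝ᵥ v| := by
      intro j
      calc α v j * b j * (w j ⬝ᵥ v) ≤ |α v j * b j * (w j ⬝ᵥ v)| := le_abs_self _
        _ = α v j * (|b j| * |w j ⬝ᵥ v|) := by
            rw [abs_mul, abs_mul, abs_of_pos (hα01 v j).1, mul_assoc]
        _ ≤ 1 * (|b j| * |w j ⬝ᵥ v|) := by
            have := mul_nonneg (abs_nonneg (b j)) (abs_nonneg (w j ⬝ᵥ v))
            exact mul_le_mul_of_nonneg_right (hα01 v j).2 this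
        _ = |b j| * |w j ⬝ᵥ v| := one_mul _
    have h2 : ∀ j, |b j| * |w j ⬝ᵥ v| ≤ ∑ i, |b j| * (|W i j| * |v i|) := by
      intro j
      rw [← Finset.mul_sum]
      refine mul_le_mul_of_nonneg_left ?_ (abs_nonneg _)
      calc |w j ⬝ᵥ v| ≤ ∑ i, |w j i * v i| := Finset.abs_sum_le_sum_abs _ _
        _ = ∑ i, |W i j| * |v i| := Finset.sum_congr rfl fun i _ => abs_mul _ _
    calc ∑ j, α v j * b j * (w j ⬝ᵥ v) ≤ ∑ j, ∑ i, |b j| * (|W i j| * |v i|) :=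
          Finset.sum_le_sum fun j _ => (h1 j).trans (h2 j)
      _ = ∑ i, d i * |v i| := by
          rw [Finset.sum_comm]
          refine Finset.sum_congr rfl fun i _ => ?_
          simp only [hd, Finset.sum_mul]
          exact Finset.sum_congr rfl fun j _ => by ring
  -- pointwise bound on the exponent
  have key : ∀ v : Fin I → ℝ,
      -(1 / 2) * (v ⬝ᵥ ((1 - ∑ j, α v j • Matrix.vecMulVec (w j) (w j)) *ᵥ v))
        + ∑ j, α v j * b j * (w j ⬝ᵥ v)
      ≤ K - (ε / 4) * ∑ i, v i ^ 2 := by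
    intro v
    have h1 : -(1 / 2) * (v ⬝ᵥ ((1 - ∑ j, α v j • Matrix.vecMulVec (w j) (w j)) *ᵥ v))
        ≤ -(1 / 2) * (ε * ∑ i, v i ^ 2) := by
      have := hQ v
      linarith
    have h2 : ∑ i, d i * |v i| ≤ ∑ i, ((ε / 4) * v i ^ 2 + d i ^ 2 / ε) := by
      refine Finset.sum_le_sum fun i _ => ?_
      have hkey : 4 * ε * (d i * |v i|) ≤ ε ^ 2 * v i ^ 2 + 4 * d i ^ 2 := by
        nlinarith [sq_nonneg (ε * |v i| - 2 * d i), sq_abs (v i)]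
      have heq : ε / 4 * v i ^ 2 + d i ^ 2 / ε - d i * |v i|
          = (ε ^ 2 * v i ^ 2 + 4 * d i ^ 2 - 4 * ε * (d i * |v i|)) / (4 * ε) := by
        field_simp
      rw [← sub_nonneg, heq]
      exact div_nonneg (by linarith) (by linarith)
    have h3 := (hL v).trans h2
    rw [Finset.sum_add_distrib, ← Finset.mul_sum] at h3
    simp only [hK]
    linarith
  -- integrable dominating function
  have hint : Integrable (fun v : Fin I → ℝ =>
      Real.exp (K - (ε / 4) * ∑ i, v i ^ 2)) := by
    have h0 : Integrable (fun v : Fin I → ℝ =>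
        ∏ i, Real.exp (-(ε / 4) * v i ^ 2)) :=
      Integrable.fintype_prod fun i => integrable_exp_neg_mul_sq (by positivity)
    have := h0.const_mul (Real.exp K)
    refine this.congr (Filter.Eventually.of_forall fun v => ?_)
    show Real.exp K * ∏ i, Real.exp (-(ε / 4) * v i ^ 2)
        = Real.exp (K - ε / 4 * ∑ i, v i ^ 2)
    rw [← Real.exp_sum, ← Real.exp_add]
    congr 1
    rw [Finset.mul_sum, sub_eq_add_neg, ← Finset.sum_neg_distrib]
    simp [neg_mul]
  calc (∫⁻ v : Fin I → ℝ, ENNReal.ofReal (Real.exp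
        (-(1 / 2) * (v ⬝ᵥ ((1 - ∑ j : Fin J,
              (if 0 < (fun i => W i j) ⬝ᵥ v + b j then (1 : ℝ) else c) •
                Matrix.vecMulVec (fun i => W i j) (fun i => W i j)) *ᵥ v))
          + ∑ j : Fin J,
              (if 0 < (fun i => W i j) ⬝ᵥ v + b j then (1 : ℝ) else c) * b j *
                ((fun i => W i j) ⬝ᵥ v))))
      ≤ ∫⁻ v : Fin I → ℝ, ENNReal.ofReal
          (Real.exp (K - (ε / 4) * ∑ i, v i ^ 2)) := by
        refine lintegral_mono fun v => ENNReal.ofReal_le_ofReal ?_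
        exact Real.exp_le_exp.mpr (key v)
    _ < ⊤ := hint.lintegral_lt_top
end

section
/- Let W_1, …, W_J ∈ ℝ^I be nonzero pairwise orthogonal vectors with Σ_j W_j W_jᵀ ⪯ I strictly (i.e., I − Σ_j W_j W_jᵀ positive definite), and let c ∈ (0,1). For v ∈ ℝ^I define α_j(v) = 1 if W_jᵀ v > 0 and α_j(v) = c otherwise. Then the partition function of the zero-bias orthogonal leaky RBM has the closed form: the integral over v ∈ ℝ^I of exp(−½ vᵀ (I − Σ_{j=1}^J α_j(v) W_j W_jᵀ) v) dv equals 2^{−J} Σ_{α ∈ {1,c}^J} (2π)^{I/2} det(I − Σ_{j=1}^J α_j W_j W_jᵀ)^{−1/2}. -/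
open Matrix BigOperators MeasureTheory Real

lemma vecMulVec_mulVec' {n m : Type*} [Fintype m] (w : n → ℝ) (u v : m → ℝ) :
    Matrix.vecMulVec w u *ᵥ v = (u ⬝ᵥ v) • w := by
  funext i
  simp only [Matrix.mulVec, Matrix.vecMulVec_apply, dotProduct, Pi.smul_apply, smul_eq_mul,
    Finset.sum_mul, Finset.mul_sum]
  exact Finset.sum_congr rfl fun k _ => by ring

lemma sum_mulVec' {n J : Type*} [Fintype n] [Fintype J] (M : J → Matrix n n ℝ) (v : n → ℝ) :
    (∑ j, M j) *ᵥ v = ∑ j, M j *ᵥ v := by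
  funext i
  simp only [Matrix.mulVec, dotProduct, Matrix.sum_apply, Finset.sum_apply, Finset.sum_mul]
  exact Finset.sum_comm

lemma dotProduct_sum'_s12 {n J : Type*} [Fintype n] [Fintype J] (v : n → ℝ) (w : J → (n → ℝ)) :
    v ⬝ᵥ (∑ j, w j) = ∑ j, v ⬝ᵥ w j := by
  simp only [dotProduct, Finset.sum_apply, Finset.mul_sum]
  exact Finset.sum_comm

lemma quad_expand {n J : Type*} [Fintype n] [Fintype J] [DecidableEq n] (α : J → ℝ)
    (W : J → (n → ℝ)) (v : n → ℝ) :
    v ⬝ᵥ ((1 - ∑ j, α j • Matrix.vecMulVec (W j) (W j)) *ᵥ v)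
      = v ⬝ᵥ v - ∑ j, α j * (W j ⬝ᵥ v) ^ 2 := by
  rw [Matrix.sub_mulVec, dotProduct_sub, Matrix.one_mulVec, sum_mulVec', dotProduct_sum'_s12]
  congr 1
  refine Finset.sum_congr rfl fun j _ => ?_
  rw [Matrix.smul_mulVec, vecMulVec_mulVec', smul_smul, dotProduct_smul, smul_eq_mul,
    dotProduct_comm]
  ring

section CoV
variable {n : ℕ} {M : Matrix (Fin n) (Fin n) ℝ}

noncomputable def matMEquiv (M : Matrix (Fin n) (Fin n) ℝ) (hM : M.det ≠ 0) :
    (Fin n → ℝ) ≃ᵐ (Fin n → ℝ) :=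
  haveI : Invertible M := M.invertibleOfIsUnitDet hM.isUnit
  (M.toLinearEquiv' this).toContinuousLinearEquiv.toHomeomorph.toMeasurableEquiv

lemma matMEquiv_coe (hM : M.det ≠ 0) : ⇑(matMEquiv M hM) = ⇑(Matrix.toLin' M) := rfl

lemma matMEquiv_apply (hM : M.det ≠ 0) (v : Fin n → ℝ) : matMEquiv M hM v = M *ᵥ v := rfl

lemma map_mulVec_volume (hM : M.det ≠ 0) :
    Measure.map (matMEquiv M hM) volume = ENNReal.ofReal |M.det|⁻¹ • volume := by
  rw [matMEquiv_coe hM, Real.map_matrix_volume_pi_eq_smul_volume_pi hM, abs_inv]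

lemma integral_comp_mulVec' (hM : M.det ≠ 0) (f : (Fin n → ℝ) → ℝ) :
    ∫ v, f (M *ᵥ v) = |M.det|⁻¹ * ∫ v, f v := by
  have h1 := (matMEquiv M hM).measurableEmbedding.integral_map (μ := volume) f
  rw [map_mulVec_volume hM, integral_smul_measure] at h1
  simp only [matMEquiv_apply hM] at h1
  rw [← h1, ENNReal.toReal_ofReal (by positivity), smul_eq_mul]

lemma integrable_comp_mulVec_iff (hM : M.det ≠ 0) (f : (Fin n → ℝ) → ℝ) :
    Integrable (fun v => f (M *ᵥ v)) ↔ Integrable f := by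
  have h1 := ((matMEquiv M hM).measurableEmbedding).integrable_map_iff (g := f) (μ := volume)
  rw [map_mulVec_volume hM] at h1
  rw [show (fun v => f (M *ᵥ v)) = f ∘ (matMEquiv M hM) from rfl]
  rw [h1.symm]
  exact integrable_smul_measure (by simp [hM]) ENNReal.ofReal_ne_top

end CoV

lemma std_gauss_eq {n : ℕ} : (fun u : Fin n → ℝ => Real.exp (-(1/2) * (u ⬝ᵥ u)))
    = fun u => ∏ i, Real.exp (-(1/2) * (u i)^2) := by
  funext u
  rw [← Real.exp_sum]
  congr 1
  simp only [dotProduct, Finset.mul_sum]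
  exact Finset.sum_congr rfl fun i _ => by ring

lemma integrable_std_gauss {n : ℕ} :
    Integrable (fun u : Fin n → ℝ => Real.exp (-(1/2) * (u ⬝ᵥ u))) := by
  rw [std_gauss_eq]
  exact Integrable.fintype_prod (fun i => integrable_exp_neg_mul_sq (by norm_num))

lemma integral_std_gauss {n : ℕ} :
    ∫ u : Fin n → ℝ, Real.exp (-(1/2) * (u ⬝ᵥ u)) = (2 * Real.pi) ^ ((n : ℝ)/2) := by
  rw [std_gauss_eq, MeasureTheory.volume_pi, integral_fintype_prod_eq_pow (ι := Fin n)
    (f := fun t : ℝ => Real.exp (-(1/2) * t^2)), integral_gaussian]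
  have h1 : Real.pi / (1/2) = 2 * Real.pi := by ring
  rw [h1, Real.sqrt_eq_rpow, Fintype.card_fin, ← Real.rpow_natCast ((2*Real.pi) ^ ((1:ℝ)/2)) n,
    ← Real.rpow_mul (by positivity)]
  norm_num
  rw [mul_comm]
  ring_nf

open scoped MatrixOrder in
lemma gauss_quad {n : ℕ} {A : Matrix (Fin n) (Fin n) ℝ} (hA : A.PosDef) :
    Integrable (fun v : Fin n → ℝ => Real.exp (-(1/2) * (v ⬝ᵥ (A *ᵥ v)))) ∧
    ∫ v : Fin n → ℝ, Real.exp (-(1/2) * (v ⬝ᵥ (A *ᵥ v)))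
      = (2 * Real.pi) ^ ((n : ℝ)/2) * A.det ^ (-(1:ℝ)/2) := by
  have hAdet : 0 < A.det := hA.det_pos
  set B := CFC.sqrt A with hBdef
  have hB2 : B * B = A := CFC.sqrt_mul_sqrt_self A hA.posSemidef.nonneg
  have hBsym : Bᵀ = B := by
    have h := (CFC.sqrt_nonneg A).posSemidef.1.eq
    rwa [Matrix.conjTranspose_eq_transpose_of_trivial] at h
  have hBdet2 : B.det * B.det = A.det := by rw [← Matrix.det_mul, hB2]
  have hBdet : B.det ≠ 0 := by
    intro h; rw [h, mul_zero] at hBdet2; exact hAdet.ne hBdet2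
  have hBabs : |B.det| = Real.sqrt A.det := by
    rw [← hBdet2, Real.sqrt_mul_self_eq_abs]
  set N := B⁻¹ with hNdef
  have hNdet : N.det ≠ 0 := by
    rw [hNdef, Matrix.det_nonsing_inv, Ring.inverse_eq_inv]
    exact inv_ne_zero hBdet
  have hNB : N * (B * B) * N = 1 := by
    rw [← Matrix.mul_assoc, Matrix.mul_assoc (N * B), hNdef,
      Matrix.nonsing_inv_mul B hBdet.isUnit, Matrix.mul_nonsing_inv B hBdet.isUnit,
      Matrix.one_mul]
  have hNsym : Nᵀ = N := by rw [hNdef, Matrix.transpose_nonsing_inv, hBsym]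
  have key : ∀ u : Fin n → ℝ, (N *ᵥ u) ⬝ᵥ (A *ᵥ (N *ᵥ u)) = u ⬝ᵥ u := by
    intro u
    have hmv : N *ᵥ u = u ᵥ* N := by
      calc N *ᵥ u = Nᵀ *ᵥ u := by rw [hNsym]
        _ = u ᵥ* N := Matrix.mulVec_transpose N u
    rw [Matrix.mulVec_mulVec, hmv,
      Matrix.dotProduct_mulVec, Matrix.vecMul_vecMul,
      show N * (A * N) = 1 by rw [← hB2, ← Matrix.mul_assoc]; exact hNB,
      Matrix.vecMul_one]
  have hcomp : (fun v : Fin n → ℝ => Real.exp (-(1/2) * ((N *ᵥ v) ⬝ᵥ (A *ᵥ (N *ᵥ v)))))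
      = fun u : Fin n → ℝ => Real.exp (-(1/2) * (u ⬝ᵥ u)) := by
    funext u; rw [key]
  constructor
  · have := (integrable_comp_mulVec_iff hNdet
      (fun v => Real.exp (-(1/2) * (v ⬝ᵥ (A *ᵥ v))))).mp
    apply this
    rw [hcomp]
    exact integrable_std_gauss
  · have h2 := integral_comp_mulVec' hNdet (fun v => Real.exp (-(1/2) * (v ⬝ᵥ (A *ᵥ v))))
    rw [hcomp, integral_std_gauss] at h2
    have habs : |N.det| = A.det ^ (-(1:ℝ)/2) := by
      rw [hNdef, Matrix.det_nonsing_inv, Ring.inverse_eq_inv, abs_inv, hBabs,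
        Real.sqrt_eq_rpow, show (-(1:ℝ)/2) = -((1:ℝ)/2) by ring, Real.rpow_neg hAdet.le]
    rw [← habs]
    field_simp at h2 ⊢
    linarith [h2]

lemma vecMulVec_transpose' {n m : Type*} (a : n → ℝ) (b : m → ℝ) :
    (Matrix.vecMulVec a b)ᵀ = Matrix.vecMulVec b a := by
  ext i j; simp [Matrix.vecMulVec_apply, mul_comm]

lemma vecMulVec_mul_vecMulVec {n : Type*} [Fintype n] (a b c d : n → ℝ) :
    Matrix.vecMulVec a b * Matrix.vecMulVec c d = (b ⬝ᵥ c) • Matrix.vecMulVec a d := by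
  ext i j
  simp only [Matrix.mul_apply, Matrix.vecMulVec_apply, Matrix.smul_apply, smul_eq_mul,
    dotProduct, Finset.sum_mul, Finset.mul_sum]
  exact Finset.sum_congr rfl fun k _ => by ring

section Refl
variable {I J : ℕ} (W : Fin J → (Fin I → ℝ))

/-- reflection coefficient -/
noncomputable def rc (t : Fin J → Bool) (j : Fin J) : ℝ :=
  if t j then 2 * (W j ⬝ᵥ W j)⁻¹ else 0

/-- reflection matrix -/
noncomputable def RM (t : Fin J → Bool) : Matrix (Fin I) (Fin I) ℝ :=
  1 - ∑ j, rc W t j • Matrix.vecMulVec (W j) (W j)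

variable (hWne : ∀ j, W j ≠ 0) (horth : ∀ i j, i ≠ j → W i ⬝ᵥ W j = 0)

include hWne in
lemma rc_sq (t : Fin J → Bool) (j : Fin J) :
    rc W t j * rc W t j * (W j ⬝ᵥ W j) = 2 * rc W t j := by
  have hW : W j ⬝ᵥ W j ≠ 0 := fun h => hWne j (by rwa [dotProduct_self_eq_zero] at h)
  unfold rc
  by_cases h : t j
  · rw [if_pos h]; field_simp
  · rw [if_neg h]; ring

include hWne horth in
lemma RM_mul_RM (t : Fin J → Bool) : RM W t * RM W t = 1 := by
  set S := ∑ j, rc W t j • Matrix.vecMulVec (W j) (W j) with hS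
  have hSS : S * S = S + S := by
    rw [hS, Finset.sum_mul_sum]
    have h1 : ∀ j ∈ Finset.univ, ∀ k ∈ Finset.univ,
        (rc W t j • Matrix.vecMulVec (W j) (W j)) * (rc W t k • Matrix.vecMulVec (W k) (W k))
          = if k = j then (2 * rc W t j) • Matrix.vecMulVec (W j) (W j) else 0 := by
      intro j _ k _
      rw [Matrix.smul_mul, Matrix.mul_smul, _root_.vecMulVec_mul_vecMulVec]
      by_cases h : k = j
      · subst h
        rw [if_pos rfl, smul_smul, smul_smul, ← rc_sq W hWne t k, mul_assoc]
      · rw [if_neg h, horth j k (fun hh => h hh.symm), zero_smul, smul_zero, smul_zero]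
    calc (∑ j, ∑ k, (rc W t j • Matrix.vecMulVec (W j) (W j)) *
            (rc W t k • Matrix.vecMulVec (W k) (W k)))
        = ∑ j, ∑ k, if k = j then (2 * rc W t j) • Matrix.vecMulVec (W j) (W j) else 0 := by
          exact Finset.sum_congr rfl fun j hj => Finset.sum_congr rfl fun k hk => h1 j hj k hk
      _ = ∑ j, (2 * rc W t j) • Matrix.vecMulVec (W j) (W j) := by
          refine Finset.sum_congr rfl fun j _ => ?_
          simp
      _ = S + S := by
          rw [hS, ← Finset.sum_add_distrib]
          refine Finset.sum_congr rfl fun j _ => ?_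
          rw [two_mul, add_smul]
  have : RM W t * RM W t = 1 - S - S + S * S := by rw [RM, ← hS]; noncomm_ring
  rw [this, hSS]; abel

include hWne horth in
lemma RM_det_abs (t : Fin J → Bool) : |(RM W t).det| = 1 := by
  have h := congrArg Matrix.det (RM_mul_RM W hWne horth t)
  rw [Matrix.det_mul, Matrix.det_one] at h
  rcases mul_self_eq_one_iff.mp h with h' | h' <;> rw [h'] <;> norm_num

lemma RM_transpose (t : Fin J → Bool) : (RM W t)ᵀ = RM W t := by
  rw [RM, Matrix.transpose_sub, Matrix.transpose_one, Matrix.transpose_sum]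
  congr 1
  refine Finset.sum_congr rfl fun j _ => ?_
  rw [Matrix.transpose_smul, vecMulVec_transpose']
end Refl

section Refl2
variable {I J : ℕ} (W : Fin J → (Fin I → ℝ))
variable (hWne : ∀ j, W j ≠ 0) (horth : ∀ i j, i ≠ j → W i ⬝ᵥ W j = 0)

lemma RM_mulVec (t : Fin J → Bool) (v : Fin I → ℝ) :
    RM W t *ᵥ v = v - ∑ j, (rc W t j * (W j ⬝ᵥ v)) • W j := by
  rw [RM, Matrix.sub_mulVec, Matrix.one_mulVec, sum_mulVec']
  congr 1
  refine Finset.sum_congr rfl fun j _ => ?_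
  rw [Matrix.smul_mulVec, vecMulVec_mulVec', smul_smul]

include hWne horth in
lemma RM_dot (t : Fin J → Bool) (k : Fin J) (v : Fin I → ℝ) :
    W k ⬝ᵥ (RM W t *ᵥ v) = (if t k then -1 else 1) * (W k ⬝ᵥ v) := by
  have hW : W k ⬝ᵥ W k ≠ 0 := fun h => hWne k (by rwa [dotProduct_self_eq_zero] at h)
  rw [RM_mulVec, dotProduct_sub, dotProduct_sum'_s12]
  have h1 : ∀ j : Fin J, W k ⬝ᵥ ((rc W t j * (W j ⬝ᵥ v)) • W j)
      = if j = k then rc W t k * (W k ⬝ᵥ v) * (W k ⬝ᵥ W k) else 0 := by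
    intro j
    rw [dotProduct_smul, smul_eq_mul]
    by_cases h : j = k
    · subst h; rw [if_pos rfl, mul_assoc]
    · rw [if_neg h, horth k j (fun hh => h hh.symm), mul_zero]
  rw [Finset.sum_congr rfl fun j _ => h1 j, Finset.sum_ite_eq' Finset.univ k,
    if_pos (Finset.mem_univ k)]
  by_cases h : t k
  · rw [if_pos h]
    unfold rc
    rw [if_pos h]
    field_simp
    ring
  · rw [if_neg h]
    unfold rc
    rw [if_neg h]
    ring

include hWne horth in
lemma RM_norm (t : Fin J → Bool) (v : Fin I → ℝ) :
    (RM W t *ᵥ v) ⬝ᵥ (RM W t *ᵥ v) = v ⬝ᵥ v := by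
  have hmv : RM W t *ᵥ v = v ᵥ* RM W t := by
    calc RM W t *ᵥ v = (RM W t)ᵀ *ᵥ v := by rw [RM_transpose]
      _ = v ᵥ* RM W t := Matrix.mulVec_transpose _ v
  rw [show (RM W t *ᵥ v) ⬝ᵥ (RM W t *ᵥ v) = (v ᵥ* RM W t) ⬝ᵥ (RM W t *ᵥ v) by rw [← hmv],
    Matrix.dotProduct_mulVec, Matrix.vecMul_vecMul, RM_mul_RM W hWne horth t,
    Matrix.vecMul_one]

include hWne horth in
lemma RM_quad (t : Fin J → Bool) (α : Fin J → ℝ) (v : Fin I → ℝ) :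
    (RM W t *ᵥ v) ⬝ᵥ ((1 - ∑ j, α j • Matrix.vecMulVec (W j) (W j)) *ᵥ (RM W t *ᵥ v))
      = v ⬝ᵥ ((1 - ∑ j, α j • Matrix.vecMulVec (W j) (W j)) *ᵥ v) := by
  rw [quad_expand, quad_expand, RM_norm W hWne horth]
  congr 1
  refine Finset.sum_congr rfl fun j _ => ?_
  rw [RM_dot W hWne horth]
  by_cases h : t j <;> simp [h]

end Refl2

lemma hyperplane_null {I : ℕ} {w : Fin I → ℝ} (hw : w ≠ 0) :
    volume {v : Fin I → ℝ | w ⬝ᵥ v = 0} = 0 := by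
  let f : (Fin I → ℝ) →ₗ[ℝ] ℝ :=
    { toFun := fun v => w ⬝ᵥ v
      map_add' := fun x y => dotProduct_add w x y
      map_smul' := fun r x => by simp [dotProduct_smul] }
  have hker : {v : Fin I → ℝ | w ⬝ᵥ v = 0} = (LinearMap.ker f : Set (Fin I → ℝ)) := rfl
  rw [hker]
  apply Measure.addHaar_submodule
  intro htop
  have hww : w ⬝ᵥ w ≠ 0 := fun h => hw (by rwa [dotProduct_self_eq_zero] at h)
  have : w ∈ LinearMap.ker f := htop ▸ Submodule.mem_top
  exact hww this

lemma posdef_As {I J : ℕ} (W : Fin J → (Fin I → ℝ))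
    (hPD : (1 - ∑ j : Fin J, Matrix.vecMulVec (W j) (W j)).PosDef)
    {c : ℝ} (hc : c ∈ Set.Ioo (0 : ℝ) 1) (α : Fin J → ℝ) (hα : ∀ j, α j ≤ 1) :
    (1 - ∑ j, α j • Matrix.vecMulVec (W j) (W j)).PosDef := by
  refine Matrix.PosDef.of_dotProduct_mulVec_pos ?_ ?_
  · show _ᴴ = _
    rw [Matrix.conjTranspose_eq_transpose_of_trivial, Matrix.transpose_sub,
      Matrix.transpose_one, Matrix.transpose_sum]
    congr 1
    exact Finset.sum_congr rfl fun j _ => by rw [Matrix.transpose_smul, vecMulVec_transpose']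
  · intro x hx
    have h1 := hPD.dotProduct_mulVec_pos hx
    rw [star_trivial] at h1 ⊢
    have he : (1 : Matrix (Fin I) (Fin I) ℝ) - ∑ j, Matrix.vecMulVec (W j) (W j)
        = 1 - ∑ j, (1 : ℝ) • Matrix.vecMulVec (W j) (W j) := by
      simp
    rw [he, quad_expand] at h1
    rw [quad_expand]
    have hle : ∑ j, α j * (W j ⬝ᵥ x) ^ 2 ≤ ∑ j, (1:ℝ) * (W j ⬝ᵥ x) ^ 2 :=
      Finset.sum_le_sum fun j _ => mul_le_mul_of_nonneg_right (hα j) (sq_nonneg _)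
    linarith

section Main
variable {I J : ℕ}

noncomputable def Amat (W : Fin J → (Fin I → ℝ)) (c : ℝ) (s : Fin J → Bool) :
    Matrix (Fin I) (Fin I) ℝ :=
  1 - ∑ j, (if s j then (1 : ℝ) else c) • Matrix.vecMulVec (W j) (W j)

noncomputable def GG (W : Fin J → (Fin I → ℝ)) (c : ℝ) (s : Fin J → Bool)
    (v : Fin I → ℝ) : ℝ :=
  Real.exp (-(1/2) * (v ⬝ᵥ (Amat W c s *ᵥ v)))

noncomputable def FF (W : Fin J → (Fin I → ℝ)) (c : ℝ) (v : Fin I → ℝ) : ℝ :=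
  Real.exp (-(1 / 2) * (v ⬝ᵥ
    ((1 - ∑ j : Fin J, (if 0 < W j ⬝ᵥ v then (1 : ℝ) else c) •
        Matrix.vecMulVec (W j) (W j)) *ᵥ v)))

variable (W : Fin J → (Fin I → ℝ)) (c : ℝ)

lemma FF_eq_GG (v : Fin I → ℝ) :
    FF W c v = GG W c (fun j => decide (0 < W j ⬝ᵥ v)) v := by
  unfold FF GG Amat
  congr 2
  simp [decide_eq_true_eq]

lemma cont_dot (w : Fin I → ℝ) : Continuous fun v : Fin I → ℝ => w ⬝ᵥ v := by
  unfold dotProduct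
  exact continuous_finset_sum _ fun i _ => continuous_const.mul (continuous_apply i)

lemma meas_FF : Measurable (FF W c) := by
  have h1 : FF W c = fun v => Real.exp (-(1/2) * (v ⬝ᵥ v -
      ∑ j, (if 0 < W j ⬝ᵥ v then (1:ℝ) else c) * (W j ⬝ᵥ v) ^ 2)) := by
    funext v; unfold FF; rw [quad_expand]
  rw [h1]
  have hm1 : Measurable fun v : Fin I → ℝ => v ⬝ᵥ v := by
    unfold dotProduct
    exact Finset.measurable_sum _ fun i _ => ((measurable_pi_apply i).mul (measurable_pi_apply i))
  have hm2 : Measurable fun v : Fin I → ℝ =>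
      ∑ j, (if 0 < W j ⬝ᵥ v then (1:ℝ) else c) * (W j ⬝ᵥ v) ^ 2 := by
    refine Finset.measurable_sum _ fun j _ => Measurable.mul ?_ ?_
    · exact Measurable.ite (measurableSet_lt measurable_const (cont_dot (W j)).measurable)
        measurable_const measurable_const
    · exact ((cont_dot (W j)).measurable).pow_const 2
  exact Real.measurable_exp.comp (measurable_const.mul (hm1.sub hm2))

end Main

/-- Closed form of the partition function of the zero-bias orthogonal
leaky RBM. Let `W_1, …, W_J ∈ ℝ^I` be nonzero pairwise orthogonal vectors with
`I − ∑_j W_j W_jᵀ` positive definite, and `c ∈ (0,1)`. With `α_j(v) = 1` if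
`W_jᵀ v > 0` and `c` otherwise,
`∫_{ℝ^I} exp(−½ vᵀ (I − ∑_j α_j(v) W_j W_jᵀ) v) dv
   = 2^{−J} ∑_{α ∈ {1,c}^J} (2π)^{I/2} det(I − ∑_j α_j W_j W_jᵀ)^{−1/2}`. -/
theorem orthogonal_leaky_rbm_partition_function {I J : ℕ}
    (W : Fin J → (Fin I → ℝ)) (hWne : ∀ j, W j ≠ 0)
    (horth : ∀ i j, i ≠ j → W i ⬝ᵥ W j = 0)
    (hPD : (1 - ∑ j : Fin J, Matrix.vecMulVec (W j) (W j)).PosDef)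
    (c : ℝ) (hc : c ∈ Set.Ioo (0 : ℝ) 1) :
    ∫ v : Fin I → ℝ, Real.exp (-(1 / 2) * (v ⬝ᵥ
        ((1 - ∑ j : Fin J, (if 0 < W j ⬝ᵥ v then (1 : ℝ) else c) •
            Matrix.vecMulVec (W j) (W j)) *ᵥ v)))
      = (2 : ℝ) ^ (-(J : ℝ)) * ∑ s : Fin J → Bool,
          (2 * Real.pi) ^ ((I : ℝ) / 2) *
            ((1 - ∑ j : Fin J, (if s j then (1 : ℝ) else c) •
                Matrix.vecMulVec (W j) (W j)).det) ^ (-(1 : ℝ) / 2) := by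
  obtain ⟨hc0, hc1⟩ := hc
  have hApos : ∀ s : Fin J → Bool, (Amat W c s).PosDef := fun s =>
    posdef_As W hPD ⟨hc0, hc1⟩ _ (fun j => by by_cases h : s j <;> simp [h] <;> linarith)
  have hGint : ∀ s, Integrable (GG W c s) := fun s => (gauss_quad (hApos s)).1
  have hintF : Integrable (FF W c) := by
    refine Integrable.mono' (integrable_finset_sum Finset.univ fun s _ => hGint s)
      (meas_FF W c).aestronglyMeasurable ?_
    filter_upwards with v
    have hGnonneg : ∀ s, 0 ≤ GG W c s v := fun s => le_of_lt (Real.exp_pos _)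
    rw [Real.norm_eq_abs, FF_eq_GG, abs_of_nonneg (hGnonneg _)]
    exact Finset.single_le_sum (f := fun s => GG W c s v)
      (fun s _ => (Real.exp_pos _).le) (Finset.mem_univ _)
  have hdet : ∀ t : Fin J → Bool, (RM W t).det ≠ 0 := by
    intro t h
    have h2 := RM_det_abs W hWne horth t
    rw [h] at h2; simp at h2
  -- pointwise key identity
  have hkey : ∀ v : Fin I → ℝ, (∀ j, W j ⬝ᵥ v ≠ 0) →
      ∑ t : Fin J → Bool, FF W c (RM W t *ᵥ v) = ∑ s : Fin J → Bool, GG W c s v := by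
    intro v hv
    have hFt : ∀ t : Fin J → Bool,
        FF W c (RM W t *ᵥ v) = GG W c (fun j => xor (t j) (decide (0 < W j ⬝ᵥ v))) v := by
      intro t
      rw [FF_eq_GG]
      have hs : (fun j => decide (0 < W j ⬝ᵥ (RM W t *ᵥ v)))
          = fun j => xor (t j) (decide (0 < W j ⬝ᵥ v)) := by
        funext j
        rw [RM_dot W hWne horth]
        rcases (hv j).lt_or_gt with h' | h' <;> by_cases h : t j <;>
          simp [h, h', neg_mul, one_mul, neg_pos, lt_asymm h']
      rw [hs]
      unfold GG Amat
      exact congrArg (fun z => Real.exp (-(1/2) * z)) (RM_quad W hWne horth t _ v)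
    rw [Finset.sum_congr rfl fun t _ => hFt t]
    exact Fintype.sum_bijective _
      (Function.Involutive.toPerm (fun t : Fin J → Bool =>
        fun j => xor (t j) (decide (0 < W j ⬝ᵥ v)))
        (fun t => by funext j; simp [Bool.xor_assoc])).bijective
      _ _ (fun t => rfl)
  -- a.e. statement
  have hae : ∀ᵐ v : Fin I → ℝ, ∀ j, W j ⬝ᵥ v ≠ 0 := by
    rw [MeasureTheory.ae_all_iff]
    intro j
    rw [ae_iff]
    have : {v : Fin I → ℝ | ¬ W j ⬝ᵥ v ≠ 0} = {v : Fin I → ℝ | W j ⬝ᵥ v = 0} := by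
      ext v; simp
    rw [this]
    exact hyperplane_null (hWne j)
  -- integral computation
  have hcomp_int : ∀ t : Fin J → Bool, ∫ v, FF W c (RM W t *ᵥ v) = ∫ v, FF W c v := by
    intro t
    rw [integral_comp_mulVec' (hdet t) (FF W c), RM_det_abs W hWne horth t]
    norm_num
  have h3 : ∫ v, (∑ t : Fin J → Bool, FF W c (RM W t *ᵥ v))
      = ∑ t : Fin J → Bool, ∫ v, FF W c (RM W t *ᵥ v) :=
    integral_finset_sum _ fun t _ => (integrable_comp_mulVec_iff (hdet t) (FF W c)).mpr hintF
  have h4 : ∫ v, (∑ t : Fin J → Bool, FF W c (RM W t *ᵥ v))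
      = ∫ v, ∑ s : Fin J → Bool, GG W c s v := by
    refine integral_congr_ae ?_
    filter_upwards [hae] with v hv
    exact hkey v hv
  have h5 : ∫ v, (∑ s : Fin J → Bool, GG W c s v) = ∑ s : Fin J → Bool, ∫ v, GG W c s v :=
    integral_finset_sum _ fun s _ => hGint s
  have h6 : ∀ s, ∫ v, GG W c s v
      = (2 * Real.pi) ^ ((I:ℝ)/2) * (Amat W c s).det ^ (-(1:ℝ)/2) :=
    fun s => (gauss_quad (hApos s)).2
  have h7 : (2:ℝ)^(J:ℕ) * ∫ v, FF W c v
      = ∑ s : Fin J → Bool, (2 * Real.pi) ^ ((I:ℝ)/2) * (Amat W c s).det ^ (-(1:ℝ)/2) := by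
    rw [← Finset.sum_congr rfl fun s _ => h6 s, ← h5, ← h4, h3,
      Finset.sum_congr rfl fun t _ => hcomp_int t, Finset.sum_const, Finset.card_univ]
    simp [Fintype.card_fun, nsmul_eq_mul]
  have hpow : (2:ℝ) ^ (-(J:ℝ)) = ((2:ℝ)^(J:ℕ))⁻¹ := by
    rw [Real.rpow_neg (by norm_num), Real.rpow_natCast]
  have hmain : ∫ v, FF W c v = (2:ℝ) ^ (-(J:ℝ)) *
      ∑ s : Fin J → Bool, (2 * Real.pi) ^ ((I:ℝ)/2) * (Amat W c s).det ^ (-(1:ℝ)/2) := by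
    rw [hpow, ← h7]
    have h2J : ((2:ℝ)^(J:ℕ)) ≠ 0 := by positivity
    rw [← mul_assoc, inv_mul_cancel₀ h2J, one_mul]
  exact hmain
end

section
/- Let W_1, …, W_J ∈ ℝ^I and b ∈ ℝ^J. The number of distinct sign vectors (𝟙[W_1ᵀ v + b_1 > 0], …, 𝟙[W_Jᵀ v + b_J > 0]) ∈ {0,1}^J realized as v ranges over ℝ^I is at most Σ_{i=0}^{I} C(J, i), where C(J, i) denotes the binomial coefficient (and C(J,i) = 0 for i > J). -/
open Matrix BigOperators

/-- Key lemma: a set `t` of indices that is "shattered" by the achievable sign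
patterns must have cardinality at most `I`. -/
lemma key_no_shatter {I J : ℕ} (W : Fin J → (Fin I → ℝ)) (b : Fin J → ℝ)
    (t : Finset (Fin J))
    (hsh : ∀ u ⊆ t, ∃ s : Fin J → Bool,
      (∃ v : Fin I → ℝ, ∀ j : Fin J, s j = decide (0 < W j ⬝ᵥ v + b j)) ∧
      t ∩ Finset.univ.filter (fun j => s j = true) = u) :
    t.card ≤ I := by
  classical
  by_contra hcontra
  push_neg at hcontra
  -- the family `W j`, `j ∈ t`, is linearly dependent
  have hcard : Module.finrank ℝ (Fin I → ℝ) < Fintype.card ↥t := by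
    simpa [Fintype.card_coe] using hcontra
  have hnli : ¬ LinearIndependent ℝ (fun j : ↥t => W j.1) := fun hli =>
    absurd hli.fintype_card_le_finrank (not_le.2 hcard)
  obtain ⟨g, hg0, j0, hj0⟩ := Fintype.not_linearIndependent_iff.1 hnli
  -- normalize so that the coefficient at `j0` is positive
  set ε : ℝ := if 0 < g j0 then 1 else -1 with hε
  set c : ↥t → ℝ := fun j => ε * g j with hc
  have hcsum : ∑ j : ↥t, c j • W j.1 = 0 := by
    have : ∑ j : ↥t, c j • W j.1 = ε • ∑ j : ↥t, g j • W j.1 := by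
      rw [Finset.smul_sum]
      exact Finset.sum_congr rfl fun j _ => (smul_smul ε (g j) _).symm
    rw [this, hg0, smul_zero]
  have hcj0 : 0 < c j0 := by
    rcases lt_trichotomy (g j0) 0 with h | h | h
    · have : ε = -1 := by rw [hε, if_neg (by linarith)]
      rw [hc]; simp only [this]; nlinarith
    · exact absurd h hj0
    · have : ε = 1 := by rw [hε, if_pos h]
      rw [hc]; simp only [this]; linarith
  set d : ℝ := ∑ j : ↥t, c j * b j.1 with hd
  -- the fundamental affine relation
  have hkey : ∀ v : Fin I → ℝ, ∑ j : ↥t, c j * (W j.1 ⬝ᵥ v + b j.1) = d := by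
    intro v
    have h1 : ∑ j : ↥t, c j * (W j.1 ⬝ᵥ v) = (∑ j : ↥t, c j • W j.1) ⬝ᵥ v := by
      simp only [dotProduct, Finset.sum_apply, Pi.smul_apply, smul_eq_mul,
        Finset.mul_sum, Finset.sum_mul, mul_assoc]
      exact Finset.sum_comm
    calc ∑ j : ↥t, c j * (W j.1 ⬝ᵥ v + b j.1)
        = ∑ j : ↥t, (c j * (W j.1 ⬝ᵥ v) + c j * b j.1) := by
          exact Finset.sum_congr rfl fun j _ => mul_add _ _ _
      _ = (∑ j : ↥t, c j * (W j.1 ⬝ᵥ v)) + d := by rw [Finset.sum_add_distrib]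
      _ = d := by rw [h1, hcsum, zero_dotProduct, zero_add]
  -- the contradictory sign pattern
  set P : ↥t → Prop := fun j => (0 < c j ↔ d ≤ 0) with hP
  have hPdec : DecidablePred P := fun j => by rw [hP]; infer_instance
  set u : Finset (Fin J) :=
    (Finset.univ.filter (fun j : ↥t => P j)).map (Function.Embedding.subtype _) with hu
  have husub : u ⊆ t := by
    intro j hj
    rw [hu] at hj
    simp only [Finset.mem_map, Finset.mem_filter, Function.Embedding.coe_subtype] at hj
    obtain ⟨j', _, rfl⟩ := hj
    exact j'.2
  obtain ⟨s, ⟨v, hv⟩, hts⟩ := hsh u husub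
  -- on `t`, the sign of the affine form matches `P`
  have hiff : ∀ j : ↥t, (0 < W j.1 ⬝ᵥ v + b j.1) ↔ P j := by
    intro j
    have h1 : j.1 ∈ t ∩ Finset.univ.filter (fun k => s k = true) ↔ j.1 ∈ u := by
      rw [hts]
    simp only [Finset.mem_inter, Finset.mem_filter, Finset.mem_univ, true_and, j.2, hu,
      Finset.mem_map, Function.Embedding.coe_subtype] at h1
    constructor
    · intro hpos
      have hsj : s j.1 = true := by rw [hv j.1]; exact decide_eq_true hpos
      obtain ⟨j', hj', hj'eq⟩ := h1.1 hsj
      have hjj : j' = j := Subtype.ext hj'eq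
      rwa [hjj] at hj'
    · intro hPj
      have hsj : s j.1 = true := h1.2 ⟨j, hPj, rfl⟩
      rw [hv j.1] at hsj
      exact of_decide_eq_true hsj
  -- derive the contradiction
  rcases le_or_gt d 0 with hdle | hdlt
  · -- every term is nonnegative and the `j0` term is positive, yet the sum is `d ≤ 0`
    have hpos : 0 < ∑ j : ↥t, c j * (W j.1 ⬝ᵥ v + b j.1) := by
      apply Finset.sum_pos'
      · intro j _
        rcases lt_or_ge 0 (c j) with hcj | hcj
        · have : 0 < W j.1 ⬝ᵥ v + b j.1 := (hiff j).2 (by rw [hP]; simp [hcj, hdle])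
          positivity
        · have hnp : ¬ P j := by rw [hP]; simp [hdle]; linarith
          have : ¬ (0 < W j.1 ⬝ᵥ v + b j.1) := fun h => hnp ((hiff j).1 h)
          push_neg at this
          nlinarith
      · refine ⟨j0, Finset.mem_univ _, ?_⟩
        have : 0 < W j0.1 ⬝ᵥ v + b j0.1 := (hiff j0).2 (by rw [hP]; simp [hcj0, hdle])
        positivity
    rw [hkey v] at hpos
    linarith
  · -- every term is nonpositive, yet the sum is `d > 0`
    have hneg : ∑ j : ↥t, c j * (W j.1 ⬝ᵥ v + b j.1) ≤ 0 := by
      apply Finset.sum_nonpos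
      intro j _
      rcases lt_or_ge 0 (c j) with hcj | hcj
      · have hnp : ¬ P j := by rw [hP]; simp [hcj]; linarith
        have : ¬ (0 < W j.1 ⬝ᵥ v + b j.1) := fun h => hnp ((hiff j).1 h)
        push_neg at this
        nlinarith
      · have : 0 < W j.1 ⬝ᵥ v + b j.1 := (hiff j).2 (by rw [hP]; constructor <;> intro h <;> linarith)
        nlinarith
    rw [hkey v] at hneg
    linarith

/-- The number of regions cut out by `J` affine hyperplanes in `ℝ^I`.
For vectors `W_1, …, W_J ∈ ℝ^I` and `b ∈ ℝ^J`, the number of distinct sign vectors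
`(𝟙[W_1ᵀ v + b_1 > 0], …, 𝟙[W_Jᵀ v + b_J > 0])` realized as `v` ranges over `ℝ^I`
is at most `∑_{i=0}^{I} C(J, i)`. -/
theorem card_sign_patterns_le {I J : ℕ} (W : Fin J → (Fin I → ℝ)) (b : Fin J → ℝ) :
    Set.ncard {s : Fin J → Bool |
        ∃ v : Fin I → ℝ, ∀ j : Fin J, s j = decide (0 < W j ⬝ᵥ v + b j)}
      ≤ ∑ i ∈ Finset.range (I + 1), Nat.choose J i := by
  classical
  set S := {s : Fin J → Bool |
      ∃ v : Fin I → ℝ, ∀ j : Fin J, s j = decide (0 < W j ⬝ᵥ v + b j)} with hS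
  have hfin : S.Finite := Set.toFinite _
  set F : (Fin J → Bool) → Finset (Fin J) :=
    fun s => Finset.univ.filter (fun j => s j = true) with hF
  have hFinj : Function.Injective F := by
    intro s s' h
    funext j
    have := Finset.ext_iff.1 h j
    simp only [hF, Finset.mem_filter, Finset.mem_univ, true_and] at this
    cases hsj : s j <;> cases hsj' : s' j <;> simp_all
  set 𝒜 : Finset (Finset (Fin J)) := hfin.toFinset.image F with h𝒜
  have hcard : S.ncard = 𝒜.card := by
    rw [Set.ncard_eq_toFinset_card S hfin]
    rw [h𝒜, Finset.card_image_of_injective _ hFinj]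
  have hvc : 𝒜.vcDim ≤ I := by
    refine Finset.sup_le ?_
    intro u hu
    rw [Finset.mem_shatterer] at hu
    refine key_no_shatter W b u ?_
    intro u' hu'
    obtain ⟨A, hA, hAu⟩ := hu hu'
    rw [h𝒜, Finset.mem_image] at hA
    obtain ⟨s, hs, rfl⟩ := hA
    rw [Set.Finite.mem_toFinset] at hs
    exact ⟨s, hs, hAu⟩
  have hIic : Finset.Iic I = Finset.range (I + 1) := by
    ext k; simp [Nat.lt_succ_iff]
  calc S.ncard = 𝒜.card := hcard
    _ ≤ 𝒜.shatterer.card := Finset.card_le_card_shatterer 𝒜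
    _ ≤ ∑ k ∈ Finset.Iic 𝒜.vcDim, (Fintype.card (Fin J)).choose k :=
        Finset.card_shatterer_le_sum_vcDim
    _ ≤ ∑ k ∈ Finset.Iic I, (Fintype.card (Fin J)).choose k := by
        apply Finset.sum_le_sum_of_subset
        exact Finset.Iic_subset_Iic.2 hvc
    _ = ∑ i ∈ Finset.range (I + 1), Nat.choose J i := by
        rw [hIic]; simp [Fintype.card_fin]
end
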